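/- arXiv:2012.01004 — 4 statements merged into one kernel-verified Lean document; each statement's English description precedes it below -/
import Mathlib

section
/- If the weight profile w is cumulatively ordered, then for every problem (P, q) there exists a w-popular matching. -/
open scoped Classical

section Defs

variable {I O : Type} [Fintype I] [Fintype O]

/-- A mechanism maps each problem (preference profile, capacity profile) to an assignment. -/
abbrev Mechanism (I O : Type) : Type :=
  (I → LinearOrder (Option O)) → (O → ℕ) → I → Option O

/-- `x` is strictly preferred to `y` under the strict preference (linear order) `p`,
where `none` represents being unassigned (∅). -/
def Prefers (p : LinearOrder (Option O)) (x y : Option O) : Prop := p.lt y x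

/-- A matching: each object `a` is assigned to at most `q a` agents. -/
def IsMatching (q : O → ℕ) (μ : I → Option O) : Prop :=
  ∀ a : O, (Finset.univ.filter fun i : I => μ i = some a).card ≤ q a

/-- Every object has capacity at least one. -/
def ValidCaps (q : O → ℕ) : Prop := ∀ a : O, 1 ≤ q a

/-- `μ` is more w-popular than `μ'`. -/
def MoreWPopular (w : I → ℝ) (P : I → LinearOrder (Option O)) (μ μ' : I → Option O) : Prop :=
  (∑ j ∈ Finset.univ.filter fun j : I => Prefers (P j) (μ' j) (μ j), w j)
    < ∑ i ∈ Finset.univ.filter fun i : I => Prefers (P i) (μ i) (μ' i), w i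

/-- `μ` is a w-popular matching for problem `(P, q)`. -/
def WPopular (w : I → ℝ) (P : I → LinearOrder (Option O)) (q : O → ℕ)
    (μ : I → Option O) : Prop :=
  IsMatching q μ ∧ ∀ μ', IsMatching q μ' → ¬ MoreWPopular w P μ' μ

/-- `μ` is more popular than `μ'` (unweighted, counting agents). -/
def MorePopular (P : I → LinearOrder (Option O)) (μ μ' : I → Option O) : Prop :=
  (Finset.univ.filter fun j : I => Prefers (P j) (μ' j) (μ j)).card
    < (Finset.univ.filter fun i : I => Prefers (P i) (μ i) (μ' i)).card

/-- `μ` is a popular matching for problem `(P, q)`. -/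
def Popular (P : I → LinearOrder (Option O)) (q : O → ℕ) (μ : I → Option O) : Prop :=
  IsMatching q μ ∧ ∀ μ', IsMatching q μ' → ¬ MorePopular P μ' μ

/-- `μ'` Pareto improves upon `μ`. -/
def ParetoImproves (P : I → LinearOrder (Option O)) (μ' μ : I → Option O) : Prop :=
  (∀ i : I, (P i).le (μ i) (μ' i)) ∧ ∃ j : I, Prefers (P j) (μ' j) (μ j)

/-- `μ` is non-wasteful: no agent prefers an object with unfilled capacity to her assignment. -/
def NonWasteful (P : I → LinearOrder (Option O)) (q : O → ℕ) (μ : I → Option O) : Prop :=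
  ∀ (i : I) (a : O), (Finset.univ.filter fun j : I => μ j = some a).card < q a →
    ¬ Prefers (P i) (some a) (μ i)

/-- The enumeration `e` lists the agents in weakly decreasing order of weight. -/
def DecreasingEnum (w : I → ℝ) (e : Fin (Fintype.card I) ≃ I) : Prop :=
  ∀ j k : Fin (Fintype.card I), j ≤ k → w (e k) ≤ w (e j)

/-- The weight profile is cumulatively ordered (w.r.t. the decreasing enumeration `e`):
each agent's weight is at least the sum of the weights of all later agents. -/
def CumulativelyOrdered (w : I → ℝ) (e : Fin (Fintype.card I) ≃ I) : Prop :=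
  ∀ j : Fin (Fintype.card I),
    (∑ k ∈ Finset.univ.filter fun k : Fin (Fintype.card I) => j < k, w (e k)) ≤ w (e j)

/-- All weights are pairwise different. -/
def DistinctWeights (w : I → ℝ) : Prop := Function.Injective w

/-- Essentially distinct (w.r.t. the decreasing enumeration `e`): all weights except possibly
the last two are pairwise different, the last two are equal, and the third-from-last weight is
at least the sum of the last two.  (Paper indices `i_1, …, i_n` correspond to `e 0, …, e (n-1)`.) -/
def EssentiallyDistinct (w : I → ℝ) (e : Fin (Fintype.card I) ≃ I) : Prop :=
  (∀ j k : Fin (Fintype.card I), j < k → (k : ℕ) + 2 ≤ Fintype.card I → w (e j) ≠ w (e k)) ∧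
  (∀ j k : Fin (Fintype.card I), (j : ℕ) + 2 = Fintype.card I → (k : ℕ) + 1 = Fintype.card I →
    w (e j) = w (e k)) ∧
  (∀ j k l : Fin (Fintype.card I), (j : ℕ) + 3 = Fintype.card I →
    (k : ℕ) + 2 = Fintype.card I → (l : ℕ) + 1 = Fintype.card I →
    w (e k) + w (e l) ≤ w (e j))

/-- The most preferred element (under `p`) of `{∅} ∪ {objects with remaining capacity}`. -/
noncomputable def sdChoice (p : LinearOrder (Option O)) (rem : O → ℕ) : Option O :=
  @Finset.max' (Option O) p
    (insert none ((Finset.univ.filter fun a : O => 0 < rem a).image some))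
    ⟨none, Finset.mem_insert_self _ _⟩

/-- State of the serial dictatorship after the first `k` agents (in the order `e`) have picked:
the partial assignment and the remaining capacities. -/
noncomputable def sdState (e : Fin (Fintype.card I) ≃ I)
    (P : I → LinearOrder (Option O)) (q : O → ℕ) : ℕ → (I → Option O) × (O → ℕ)
  | 0 => (fun _ => none, q)
  | k + 1 =>
    let prev := sdState e P q k
    if h : k < Fintype.card I then
      let i := e ⟨k, h⟩
      let c := sdChoice (P i) prev.2
      (Function.update prev.1 i c, fun a => if c = some a then prev.2 a - 1 else prev.2 a)
    else prev

/-- The outcome of the serial dictatorship with agent ordering `e` at problem `(P, q)`: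
agents pick, one by one in the order `e`, their most preferred acceptable object with
remaining capacity (and get ∅ if none remains). -/
noncomputable def SD (e : Fin (Fintype.card I) ≃ I)
    (P : I → LinearOrder (Option O)) (q : O → ℕ) : I → Option O :=
  (sdState e P q (Fintype.card I)).1

/-- An agent ordering is consistent with the weight profile `w` if agents with strictly larger
weight come strictly earlier. -/
def ConsistentOrder (w : I → ℝ) (e : Fin (Fintype.card I) ≃ I) : Prop :=
  ∀ i j : I, w j < w i → e.symm i < e.symm j

/-- A mechanism always produces a matching. -/
def IsMechanism (ψ : Mechanism I O) : Prop :=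
  ∀ P q, ValidCaps q → IsMatching q (ψ P q)

/-- Strategy-proofness: no agent can ever obtain a strictly preferred assignment
by misreporting. -/
def StrategyProof (ψ : Mechanism I O) : Prop :=
  ∀ P q, ValidCaps q → ∀ (i : I) (P'i : LinearOrder (Option O)),
    ¬ Prefers (P i) (ψ (Function.update P i P'i) q i) (ψ P q i)

/-- A mechanism is w-popular if its outcome is w-popular whenever a w-popular matching exists. -/
def WPopularMech (w : I → ℝ) (ψ : Mechanism I O) : Prop :=
  ∀ P q, ValidCaps q → (∃ μ, WPopular w P q μ) → WPopular w P q (ψ P q)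

/-- A mechanism is popular if its outcome is popular whenever a popular matching exists. -/
def PopularMech (ψ : Mechanism I O) : Prop :=
  ∀ P q, ValidCaps q → (∃ μ, Popular P q μ) → Popular P q (ψ P q)

/-- A mechanism is non-wasteful if its outcome is always non-wasteful. -/
def NonWastefulMech (ψ : Mechanism I O) : Prop :=
  ∀ P q, ValidCaps q → NonWasteful P q (ψ P q)

/-- `p` declares `a` as its only acceptable object (the class 𝒫ₐ). -/
def OnlyAcceptable (p : LinearOrder (Option O)) (a : O) : Prop :=
  p.lt none (some a) ∧ ∀ b : O, b ≠ a → p.lt (some b) none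

/-- `p` declares no object acceptable (the class 𝒫_∅). -/
def NothingAcceptable (p : LinearOrder (Option O)) : Prop :=
  ∀ b : O, p.lt (some b) none

/-- Preserving dispute resolutions. -/
def PreservesDisputeResolutions (ψ : Mechanism I O) : Prop :=
  ∀ P q, ValidCaps q → ∀ (i j : I) (a : O) (P'i : LinearOrder (Option O)),
    ψ P q j = some a → Prefers (P i) (some a) (ψ P q i) →
    OnlyAcceptable P'i a → ψ (Function.update P i P'i) q i = none →
    ∀ (P'' : I → LinearOrder (Option O)) (q' : O → ℕ), ValidCaps q' → q' a = 1 →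
      OnlyAcceptable (P'' i) a → OnlyAcceptable (P'' j) a →
      (∀ k : I, k ≠ i → k ≠ j → NothingAcceptable (P'' k)) →
      ψ P'' q' i = none ∧ ψ P'' q' j = some a

/-- `P'` is a (pure) Nash equilibrium of the preference-reporting game induced by `ψ`
at the problem `(P, q)` (true preferences `P`). -/
def NashEq (ψ : Mechanism I O) (P : I → LinearOrder (Option O)) (q : O → ℕ)
    (P' : I → LinearOrder (Option O)) : Prop :=
  ∀ (i : I) (P''i : LinearOrder (Option O)),
    ¬ Prefers (P i) (ψ (Function.update P' i P''i) q i) (ψ P' q i)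

/-- The mechanism admits a Nash equilibrium at every problem. -/
def AdmitsNash (ψ : Mechanism I O) : Prop :=
  ∀ P q, ValidCaps q → ∃ P', NashEq ψ P q P'

/-- w-popularity in equilibrium: every Nash-equilibrium outcome is w-popular
whenever a w-popular matching exists. -/
def WPopularInEquilibrium (w : I → ℝ) (ψ : Mechanism I O) : Prop :=
  ∀ P q, ValidCaps q → ∀ P', NashEq ψ P q P' →
    (∃ μ, WPopular w P q μ) → WPopular w P q (ψ P' q)

end Defs

section Aux

variable {I O : Type} [Fintype I] [Fintype O]

lemma sdChoice_mem (p : LinearOrder (Option O)) (rem : O → ℕ) :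
    sdChoice p rem ∈ insert none ((Finset.univ.filter fun a : O => 0 < rem a).image some) :=
  Finset.max'_mem _ _

lemma sdChoice_le (p : LinearOrder (Option O)) (rem : O → ℕ) (x : Option O)
    (hx : x ∈ insert none ((Finset.univ.filter fun a : O => 0 < rem a).image some)) :
    p.le x (sdChoice p rem) :=
  @Finset.le_max' (Option O) p _ x hx

lemma sdChoice_pos (p : LinearOrder (Option O)) (rem : O → ℕ) (a : O)
    (h : sdChoice p rem = some a) : 0 < rem a := by
  have hm := sdChoice_mem p rem
  rw [h] at hm
  rcases Finset.mem_insert.mp hm with h' | h'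
  · exact absurd h' (by simp)
  · rcases Finset.mem_image.mp h' with ⟨b, hb, hba⟩
    have : b = a := by injection hba
    subst this
    exact (Finset.mem_filter.mp hb).2

variable (e : Fin (Fintype.card I) ≃ I) (P : I → LinearOrder (Option O)) (q : O → ℕ)

lemma sdState_fst_of_ge : ∀ (k : ℕ) (i : I), k ≤ (e.symm i : ℕ) →
    (sdState e P q k).1 i = none := by
  intro k
  induction k with
  | zero => intro i _; rfl
  | succ k ih =>
    intro i hi
    rw [sdState]
    by_cases h : k < Fintype.card I
    · rw [dif_pos h]
      dsimp only
      rw [Function.update_of_ne, ih i (by omega)]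
      intro hc
      have : e.symm i = (⟨k, h⟩ : Fin (Fintype.card I)) := by rw [hc]; simp
      have : (e.symm i : ℕ) = k := by rw [this]
      omega
    · rw [dif_neg h]
      exact ih i (by omega)

lemma sdState_fst_of_lt : ∀ (k : ℕ) (i : I), (e.symm i : ℕ) < k →
    (sdState e P q k).1 i = sdChoice (P i) ((sdState e P q (e.symm i : ℕ)).2) := by
  intro k
  induction k with
  | zero => intro i hi; omega
  | succ k ih =>
    intro i hi
    rw [sdState]
    by_cases h : k < Fintype.card I
    · rw [dif_pos h]
      dsimp only
      by_cases hik : (e.symm i : ℕ) = k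
      · have hei : e ⟨k, h⟩ = i := by
          have : (⟨k, h⟩ : Fin (Fintype.card I)) = e.symm i := by
            apply Fin.ext; exact hik.symm
          rw [this]; simp
        rw [hei, Function.update_self, hik]
      · rw [Function.update_of_ne, ih i (by omega)]
        intro hc
        have : e.symm i = (⟨k, h⟩ : Fin (Fintype.card I)) := by rw [hc]; simp
        exact hik (by rw [this])
    · rw [dif_neg h]
      have := (e.symm i).isLt
      exact ih i (by omega)

lemma sdState_inv : ∀ (k : ℕ) (a : O),
    (sdState e P q k).2 a
      + (Finset.univ.filter fun i : I => (sdState e P q k).1 i = some a).card = q a := by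
  intro k
  induction k with
  | zero =>
    intro a
    have : (Finset.univ.filter fun i : I => (sdState e P q 0).1 i = some a) = ∅ := by
      apply Finset.filter_false_of_mem
      intro i _
      exact fun hc => by simp [sdState] at hc
    rw [this]
    simp [sdState]
  | succ k ih =>
    intro a
    rw [sdState]
    by_cases h : k < Fintype.card I
    · rw [dif_pos h]
      dsimp only
      set i0 := e ⟨k, h⟩ with hi0
      set c := sdChoice (P i0) ((sdState e P q k).2) with hc
      have hnone : (sdState e P q k).1 i0 = none := by
        apply sdState_fst_of_ge
        simp [hi0]
      have hni0 : i0 ∉ (Finset.univ.filter fun i : I => (sdState e P q k).1 i = some a) := by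
        simp [hnone]
      by_cases hca : c = some a
      · have hpos : 0 < (sdState e P q k).2 a := sdChoice_pos _ _ _ hca
        have hfil : (Finset.univ.filter fun i : I =>
            Function.update (sdState e P q k).1 i0 c i = some a)
            = insert i0 (Finset.univ.filter fun i : I => (sdState e P q k).1 i = some a) := by
          ext i
          simp only [Finset.mem_filter, Finset.mem_univ, true_and, Finset.mem_insert,
            Function.update_apply]
          split_ifs with hii
          · simp [hii, hca]
          · simp [hii]
        rw [hfil, Finset.card_insert_of_notMem hni0, if_pos hca]
        have := ih a
        omega
      · have hfil : (Finset.univ.filter fun i : I =>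
            Function.update (sdState e P q k).1 i0 c i = some a)
            = Finset.univ.filter fun i : I => (sdState e P q k).1 i = some a := by
          ext i
          simp only [Finset.mem_filter, Finset.mem_univ, true_and, Function.update_apply]
          split_ifs with hii
          · simp [hii, hca, hnone]
          · rfl
        rw [hfil, if_neg hca]
        exact ih a
    · rw [dif_neg h]
      exact ih a

lemma sd_isMatching : IsMatching q (SD e P q) := by
  intro a
  have := sdState_inv e P q (Fintype.card I) a
  unfold SD
  omega

end Aux

/-- Cumulatively ordered weights guarantee existence of a w-popular matching. -/
theorem stmt2 {I O : Type} [Fintype I] [Fintype O]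
    (hI : 3 ≤ Fintype.card I) (hIO : Fintype.card I ≤ Fintype.card O)
    (w : I → ℝ) (hw : ∀ i, 0 < w i)
    (e : Fin (Fintype.card I) ≃ I) (he : DecreasingEnum w e)
    (hco : CumulativelyOrdered w e)
    (P : I → LinearOrder (Option O)) (q : O → ℕ) (hq : ValidCaps q) :
    ∃ μ : I → Option O, WPopular w P q μ := by
  set μ := SD e P q with hμ
  refine ⟨μ, sd_isMatching e P q, ?_⟩
  intro ν hν hmore
  -- hmore : sum over agents preferring μ < sum over agents preferring ν
  unfold MoreWPopular at hmore
  set A := Finset.univ.filter fun i : I => Prefers (P i) (μ i) (ν i) with hA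
  set B := Finset.univ.filter fun i : I => Prefers (P i) (ν i) (μ i) with hB
  have hμi : ∀ i : I, μ i = sdChoice (P i) ((sdState e P q (e.symm i : ℕ)).2) := by
    intro i
    exact sdState_fst_of_lt e P q (Fintype.card I) i (e.symm i).isLt
  -- D : set of indices where ν differs from μ
  set D := Finset.univ.filter fun j : Fin (Fintype.card I) => ν (e j) ≠ μ (e j) with hD
  by_cases hDe : D = ∅
  · -- ν = μ, both sides empty
    have hall : ∀ i : I, ν i = μ i := by
      intro i
      by_contra hne
      have : e.symm i ∈ D := by
        simp only [hD, Finset.mem_filter, Finset.mem_univ, true_and]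
        simpa using hne
      rw [hDe] at this
      exact absurd this (Finset.notMem_empty _)
    have hAe : A = ∅ := by
      apply Finset.filter_false_of_mem
      intro i _
      letI := P i
      rw [Prefers, hall i]
      exact lt_irrefl _
    have hBe : B = ∅ := by
      apply Finset.filter_false_of_mem
      intro i _
      letI := P i
      rw [Prefers, hall i]
      exact lt_irrefl _
    rw [hAe, hBe] at hmore
    simp at hmore
  · have hDne : D.Nonempty := Finset.nonempty_of_ne_empty hDe
    set j₀ := D.min' hDne with hj₀
    set i₀ := e j₀ with hi₀
    have hj₀D : j₀ ∈ D := Finset.min'_mem _ _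
    have hνμ : ν i₀ ≠ μ i₀ := by
      have := Finset.mem_filter.mp hj₀D
      exact this.2
    -- agents with index < j₀ agree
    have hagree : ∀ j : Fin (Fintype.card I), j < j₀ → ν (e j) = μ (e j) := by
      intro j hj
      by_contra hne
      have hjD : j ∈ D := by
        simp only [hD, Finset.mem_filter, Finset.mem_univ, true_and]
        exact hne
      exact absurd (Finset.min'_le _ _ hjD) (not_le.mpr hj)
    -- claim: i₀ strictly prefers μ
    have hclaim : (P i₀).lt (ν i₀) (μ i₀) := by
      have hmem : ν i₀ ∈ insert none
          ((Finset.univ.filter fun a : O => 0 < (sdState e P q (j₀ : ℕ)).2 a).image some) := by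
        rcases hx : ν i₀ with _ | a
        · exact Finset.mem_insert_self _ _
        · apply Finset.mem_insert_of_mem
          apply Finset.mem_image.mpr
          refine ⟨a, Finset.mem_filter.mpr ⟨Finset.mem_univ _, ?_⟩, rfl⟩
          by_contra hzero
          push_neg at hzero
          have hz : (sdState e P q (j₀ : ℕ)).2 a = 0 := Nat.le_zero.mp hzero
          have hcard := sdState_inv e P q (j₀ : ℕ) a
          rw [hz] at hcard
          -- q a agents before j₀ got a under μ, hence under ν too; plus i₀ gets a under ν
          set F := Finset.univ.filter fun i : I => (sdState e P q (j₀ : ℕ)).1 i = some a with hF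
          have hFsub : F ⊆ Finset.univ.filter fun i : I => ν i = some a := by
            intro i hi
            have hi' := (Finset.mem_filter.mp hi).2
            have hlt : (e.symm i : ℕ) < (j₀ : ℕ) := by
              by_contra hge
              push_neg at hge
              rw [sdState_fst_of_ge e P q _ i hge] at hi'
              exact nomatch hi'
            have hμii : μ i = some a := by
              rw [hμi i, ← sdState_fst_of_lt e P q (j₀ : ℕ) i hlt]
              exact hi'
            have hlt' : e.symm i < j₀ := by
              have : ((e.symm i : ℕ) : ℕ) < (j₀ : ℕ) := hlt
              exact Fin.lt_def.mpr this
            have := hagree (e.symm i) hlt'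
            rw [Equiv.apply_symm_apply] at this
            rw [Finset.mem_filter]
            exact ⟨Finset.mem_univ _, by rw [this, hμii]⟩
          have hi₀F : i₀ ∉ F := by
            simp only [hF, Finset.mem_filter, Finset.mem_univ, true_and]
            rw [sdState_fst_of_ge e P q _ i₀ (by simp [hi₀])]
            exact fun hc => nomatch hc
          have hi₀mem : i₀ ∈ Finset.univ.filter fun i : I => ν i = some a := by
            rw [Finset.mem_filter]
            exact ⟨Finset.mem_univ _, hx⟩
          have hsub2 : insert i₀ F ⊆ Finset.univ.filter fun i : I => ν i = some a := by
            intro i hi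
            rcases Finset.mem_insert.mp hi with h' | h'
            · rw [h']; exact hi₀mem
            · exact hFsub h'
          have hcard2 := Finset.card_le_card hsub2
          rw [Finset.card_insert_of_notMem hi₀F] at hcard2
          have hνa := hν a
          omega
      have hle : (P i₀).le (ν i₀) (μ i₀) := by
        have := sdChoice_le (P i₀) ((sdState e P q (j₀ : ℕ)).2) (ν i₀) hmem
        rw [hμi i₀]
        have hj₀i : e.symm i₀ = j₀ := by simp [hi₀]
        rw [hj₀i]
        exact this
      letI := P i₀
      exact lt_of_le_of_ne hle hνμ
    have hi₀A : i₀ ∈ A := by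
      rw [hA, Finset.mem_filter]
      exact ⟨Finset.mem_univ _, hclaim⟩
    -- B ⊆ image of later indices
    have hBsub : B ⊆ (Finset.univ.filter fun k : Fin (Fintype.card I) => j₀ < k).image e := by
      intro i hi
      have hi' := (Finset.mem_filter.mp hi).2
      letI := P i
      have hne : ν i ≠ μ i := ne_of_gt hi'
      have hiD : e.symm i ∈ D := by
        simp only [hD, Finset.mem_filter, Finset.mem_univ, true_and]
        simpa using hne
      have hge : j₀ ≤ e.symm i := Finset.min'_le _ _ hiD
      have hneq : e.symm i ≠ j₀ := by
        intro hc
        have hii : i = i₀ := by rw [hi₀, ← hc]; simp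
        letI := P i₀
        rw [hii] at hi'
        exact absurd hi' (lt_asymm hclaim)
      apply Finset.mem_image.mpr
      exact ⟨e.symm i, Finset.mem_filter.mpr ⟨Finset.mem_univ _,
        lt_of_le_of_ne hge (Ne.symm hneq)⟩, by simp⟩
    have hsumB : (∑ i ∈ B, w i)
        ≤ ∑ k ∈ Finset.univ.filter fun k : Fin (Fintype.card I) => j₀ < k, w (e k) := by
      have h1 : (∑ i ∈ B, w i)
          ≤ ∑ i ∈ (Finset.univ.filter fun k : Fin (Fintype.card I) => j₀ < k).image e, w i := by
        apply Finset.sum_le_sum_of_subset_of_nonneg hBsub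
        intro i _ _
        exact (hw i).le
      have h2 : (∑ i ∈ (Finset.univ.filter fun k : Fin (Fintype.card I) => j₀ < k).image e, w i)
          = ∑ k ∈ Finset.univ.filter fun k : Fin (Fintype.card I) => j₀ < k, w (e k) := by
        apply Finset.sum_image
        intro x _ y _ hxy
        exact e.injective hxy
      rw [h2] at h1
      exact h1
    have hsumA : w i₀ ≤ ∑ i ∈ A, w i := by
      apply Finset.single_le_sum (fun i _ => (hw i).le) hi₀A
    have hchain : (∑ i ∈ B, w i) ≤ ∑ i ∈ A, w i :=
      le_trans hsumB (le_trans (hco j₀) hsumA)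
    exact absurd hmore (not_lt.mpr hchain)
end

section
/- If the weight profile w is not cumulatively ordered, then there exists a problem (P, q) in which no w-popular matching exists. -/
open scoped Classical

set_option linter.unusedSectionVars false
set_option linter.unusedVariables false
set_option maxHeartbeats 1000000

section Aux
variable {I O : Type} [Fintype I] [Fintype O]

noncomputable def gOb (O : Type) [Fintype O] : O → ℕ := fun o => (Fintype.equivFin O o).val

lemma gOb_inj : Function.Injective (gOb O) := fun a b h =>
  (Fintype.equivFin O).injective (Fin.ext h)

def psiF (g : O → ℕ) (τ : O → ℕ) : Option O → ℕ ×ₗ ℕ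
  | none => toLex (1, 0)
  | some o => toLex (τ o, g o)

lemma psiF_inj (g τ : O → ℕ) (hg : Function.Injective g) (hτ : ∀ o, τ o ≠ 1) :
    Function.Injective (psiF g τ) := by
  intro x y h
  match x, y with
  | none, none => rfl
  | none, some o =>
      exfalso; simp only [psiF] at h
      exact hτ o (congrArg (fun p => (ofLex p).1) h).symm
  | some o, none =>
      exfalso; simp only [psiF] at h
      exact hτ o (congrArg (fun p => (ofLex p).1) h)
  | some o, some o' =>
      simp only [psiF] at h
      exact congrArg some (hg (congrArg (fun p => (ofLex p).2) h))

noncomputable def mkP (τ : O → ℕ) (hτ : ∀ o, τ o ≠ 1) : LinearOrder (Option O) :=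
  LinearOrder.lift' (psiF (gOb O) τ) (psiF_inj _ _ gOb_inj hτ)

variable {τ : O → ℕ} {hτ : ∀ o, τ o ≠ 1}

lemma prefers_mkP {x y : Option O} :
    Prefers (mkP τ hτ) x y ↔ psiF (gOb O) τ y < psiF (gOb O) τ x := Iff.rfl

lemma pref_some_none {o : O} : Prefers (mkP τ hτ) (some o) none ↔ 2 ≤ τ o := by
  rw [prefers_mkP]
  show toLex ((1:ℕ), (0:ℕ)) < toLex (τ o, gOb O o) ↔ _
  rw [Prod.Lex.lt_iff]
  simp only [ofLex_toLex]
  constructor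
  · rintro (h | ⟨h, -⟩)
    · omega
    · exact absurd h.symm (hτ o)
  · intro h; left; omega

lemma pref_none_some {o : O} : Prefers (mkP τ hτ) none (some o) ↔ τ o = 0 := by
  rw [prefers_mkP]
  show toLex (τ o, gOb O o) < toLex ((1:ℕ), (0:ℕ)) ↔ _
  rw [Prod.Lex.lt_iff]
  simp only [ofLex_toLex]
  constructor
  · rintro (h | ⟨-, h⟩) <;> omega
  · intro h; left; omega

lemma pref_some_some {o o' : O} (h : τ o' < τ o) :
    Prefers (mkP τ hτ) (some o) (some o') := by
  rw [prefers_mkP]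
  show toLex (τ o', gOb O o') < toLex (τ o, gOb O o)
  rw [Prod.Lex.lt_iff]; left; exact h

lemma pref_irrefl {x : Option O} : ¬ Prefers (mkP τ hτ) x x := by
  rw [prefers_mkP]; exact lt_irrefl _

lemma pref_asymm {x y : Option O} (h : Prefers (mkP τ hτ) x y) :
    ¬ Prefers (mkP τ hτ) y x := by
  rw [prefers_mkP] at h ⊢; exact not_lt_of_gt h

lemma beats_of (w : I → ℝ) (hw : ∀ i, 0 < w i) (P : I → LinearOrder (Option O))
    (ν μ : I → Option O) (W L : Finset I)
    (hW : ∀ i ∈ W, Prefers (P i) (ν i) (μ i))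
    (hL : ∀ i, Prefers (P i) (μ i) (ν i) → i ∈ L)
    (h : ∑ i ∈ L, w i < ∑ i ∈ W, w i) : MoreWPopular w P ν μ := by
  have h1 : ∑ j ∈ (Finset.univ.filter fun j => Prefers (P j) (μ j) (ν j)), w j
      ≤ ∑ i ∈ L, w i := by
    apply Finset.sum_le_sum_of_subset_of_nonneg
    · intro i hi
      simp only [Finset.mem_filter] at hi
      exact hL i hi.2
    · intro i _ _; exact (hw i).le
  have h2 : ∑ i ∈ W, w i ≤ ∑ i ∈ (Finset.univ.filter fun i => Prefers (P i) (ν i) (μ i)), w i := by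
    apply Finset.sum_le_sum_of_subset_of_nonneg
    · intro i hi
      simp only [Finset.mem_filter]
      exact ⟨Finset.mem_univ i, hW i hi⟩
    · intro i _ _; exact (hw i).le
  exact lt_of_le_of_lt h1 (lt_of_lt_of_le h h2)

lemma isMatching_one {μ : I → Option O}
    (h : ∀ (o : O) (i j : I), μ i = some o → μ j = some o → i = j) :
    IsMatching (fun _ : O => 1) μ := by
  intro a
  rw [Finset.card_le_one]
  intro i hi j hj
  simp only [Finset.mem_filter] at hi hj
  exact h a i j hi.2 hj.2

lemma inj_of_isMatching {μ : I → Option O} (h : IsMatching (fun _ : O => 1) μ) :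
    ∀ (o : O) (i j : I), μ i = some o → μ j = some o → i = j := by
  intro o i j hi hj
  have hcard := h o
  rw [Finset.card_le_one] at hcard
  exact hcard i (by simp [hi]) j (by simp [hj])

lemma phase1 (w : I → ℝ) (hw : ∀ i, 0 < w i) (τa : I → O → ℕ) (hτ : ∀ i o, τa i o ≠ 1)
    (μ : I → Option O) (hm : IsMatching (fun _ : O => 1) μ)
    (hopt : ∀ ν, IsMatching (fun _ : O => 1) ν →
      ¬ MoreWPopular w (fun i => mkP (τa i) (hτ i)) ν μ) :
    ∀ i o, μ i = some o → 2 ≤ τa i o := by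
  intro i o hio
  by_contra hlt
  have h0 : τa i o = 0 := by have := hτ i o; omega
  set ν : I → Option O := Function.update μ i none with hν
  have hνm : IsMatching (fun _ : O => 1) ν := by
    apply isMatching_one
    intro o' j k hj hk
    by_cases hji : j = i
    · subst hji; rw [hν, Function.update_self] at hj; cases hj
    · by_cases hki : k = i
      · subst hki; rw [hν, Function.update_self] at hk; cases hk
      · rw [hν, Function.update_of_ne hji] at hj
        rw [hν, Function.update_of_ne hki] at hk
        exact inj_of_isMatching hm o' j k hj hk
  refine hopt ν hνm ?_
  apply beats_of w hw _ ν μ {i} ∅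
  · intro j hj
    rw [Finset.mem_singleton] at hj
    subst hj
    rw [hν, Function.update_self, hio]
    exact pref_none_some.mpr h0
  · intro j hpref
    exfalso
    by_cases hji : j = i
    · subst hji
      rw [hν, Function.update_self, hio] at hpref
      rw [pref_some_none] at hpref
      omega
    · rw [hν, Function.update_of_ne hji] at hpref
      exact pref_irrefl hpref
  · simp [hw i]

lemma phase2 (w : I → ℝ) (hw : ∀ i, 0 < w i) (τa : I → O → ℕ) (hτ : ∀ i o, τa i o ≠ 1)
    (μ : I → Option O) (hm : IsMatching (fun _ : O => 1) μ)
    (hopt : ∀ ν, IsMatching (fun _ : O => 1) ν →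
      ¬ MoreWPopular w (fun i => mkP (τa i) (hτ i)) ν μ) :
    ∀ i o, Prefers (mkP (τa i) (hτ i)) (some o) (μ i) → ∃ h, μ h = some o := by
  intro i o hpref
  by_contra hno
  push_neg at hno
  set ν : I → Option O := Function.update μ i (some o) with hν
  have hνm : IsMatching (fun _ : O => 1) ν := by
    apply isMatching_one
    intro o' j k hj hk
    by_cases hji : j = i
    · subst hji
      rw [hν, Function.update_self] at hj
      by_cases hki : k = j
      · exact hki.symm
      · exfalso
        rw [hν, Function.update_of_ne hki] at hk
        apply hno k
        rw [hk]
        exact hj.symm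
    · by_cases hki : k = i
      · subst hki
        exfalso
        rw [hν, Function.update_self] at hk
        rw [hν, Function.update_of_ne hji] at hj
        apply hno j
        rw [hj]
        exact hk.symm
      · rw [hν, Function.update_of_ne hji] at hj
        rw [hν, Function.update_of_ne hki] at hk
        exact inj_of_isMatching hm o' j k hj hk
  refine hopt ν hνm ?_
  apply beats_of w hw _ ν μ {i} ∅
  · intro j hj
    rw [Finset.mem_singleton] at hj
    subst hj
    rwa [hν, Function.update_self]
  · intro j hpref'
    exfalso
    by_cases hji : j = i
    · subst hji
      rw [hν, Function.update_self] at hpref'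
      exact pref_asymm hpref hpref'
    · rw [hν, Function.update_of_ne hji] at hpref'
      exact pref_irrefl hpref'
  · simp [hw i]



noncomputable def tauA (i0 i1 i2 : I) (a b : O) : I → O → ℕ := fun i o =>
  if i = i0 ∨ i = i1 ∨ i = i2 then (if o = a then 3 else if o = b then 2 else 0) else 0

lemma tauA_ne_one (i0 i1 i2 : I) (a b : O) : ∀ i o, tauA i0 i1 i2 a b i o ≠ 1 := by
  intro i o; unfold tauA; split_ifs <;> omega

lemma gadgetA (w : I → ℝ) (hw : ∀ i, 0 < w i) (i0 i1 i2 : I)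
    (d01 : i0 ≠ i1) (d02 : i0 ≠ i2) (d12 : i1 ≠ i2) (a b : O) (hab : a ≠ b)
    (hsum : w i0 < w i1 + w i2) (hw1 : w i1 ≤ w i0) (hw2 : w i2 ≤ w i1) :
    ∃ (P : I → LinearOrder (Option O)) (q : O → ℕ), ValidCaps q ∧
      ∀ μ : I → Option O, ¬ WPopular w P q μ := by
  set τa : I → O → ℕ := tauA i0 i1 i2 a b with hτa
  have hτ : ∀ i o, τa i o ≠ 1 := tauA_ne_one i0 i1 i2 a b
  refine ⟨fun i => mkP (τa i) (hτ i), fun _ => 1, fun o => le_refl 1, ?_⟩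
  rintro μ ⟨hm, hopt⟩
  have h1 := phase1 w hw τa hτ μ hm hopt
  have h2 := phase2 w hw τa hτ μ hm hopt
  have htaga : ∀ i, (i = i0 ∨ i = i1 ∨ i = i2) → τa i a = 3 := by
    intro i hi; simp [hτa, tauA, hi]
  have htagb : ∀ i, (i = i0 ∨ i = i1 ∨ i = i2) → τa i b = 2 := by
    intro i hi; simp [hτa, tauA, hi, Ne.symm hab]
  have hobj : ∀ i o, μ i = some o → (i = i0 ∨ i = i1 ∨ i = i2) ∧ (o = a ∨ o = b) := by
    intro i o hio
    have h := h1 i o hio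
    by_cases ht : i = i0 ∨ i = i1 ∨ i = i2
    · refine ⟨ht, ?_⟩
      by_cases hoa : o = a
      · exact Or.inl hoa
      · by_cases hob : o = b
        · exact Or.inr hob
        · exfalso; simp [hτa, tauA, ht, hoa, hob] at h
    · exfalso; simp [hτa, tauA, ht] at h
  -- some trio agent is unmatched
  have hz : ∃ z, (z = i0 ∨ z = i1 ∨ z = i2) ∧ μ z = none := by
    by_contra hno
    push_neg at hno
    have e0 : ∃ o, μ i0 = some o := by
      cases hmu : μ i0 with
      | none => exact absurd hmu (hno i0 (Or.inl rfl))
      | some o => exact ⟨o, rfl⟩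
    have e1 : ∃ o, μ i1 = some o := by
      cases hmu : μ i1 with
      | none => exact absurd hmu (hno i1 (Or.inr (Or.inl rfl)))
      | some o => exact ⟨o, rfl⟩
    have e2 : ∃ o, μ i2 = some o := by
      cases hmu : μ i2 with
      | none => exact absurd hmu (hno i2 (Or.inr (Or.inr rfl)))
      | some o => exact ⟨o, rfl⟩
    obtain ⟨o0, ho0⟩ := e0
    obtain ⟨o1, ho1⟩ := e1
    obtain ⟨o2, ho2⟩ := e2
    have k0 := (hobj i0 o0 ho0).2
    have k1 := (hobj i1 o1 ho1).2
    have k2 := (hobj i2 o2 ho2).2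
    have inj := inj_of_isMatching hm
    rcases k0 with h | h <;> rw [h] at ho0 <;> clear h <;>
      rcases k1 with h | h <;> rw [h] at ho1 <;> clear h <;>
        rcases k2 with h | h <;> rw [h] at ho2 <;> clear h <;>
          first
          | exact d01 (inj _ i0 i1 ho0 ho1)
          | exact d02 (inj _ i0 i2 ho0 ho2)
          | exact d12 (inj _ i1 i2 ho1 ho2)
  obtain ⟨z, hztrio, hzn⟩ := hz
  obtain ⟨x, hx⟩ := h2 z a (by
    rw [hzn]; exact pref_some_none.mpr (by rw [htaga z hztrio]; omega))
  obtain ⟨y, hy⟩ := h2 z b (by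
    rw [hzn]; exact pref_some_none.mpr (by rw [htagb z hztrio]))
  have hxtrio := (hobj x a hx).1
  have hytrio := (hobj y b hy).1
  have hxy : x ≠ y := by
    intro h; rw [h, hy] at hx; exact hab (Option.some.inj hx).symm
  have hzx : z ≠ x := by
    intro h; rw [← h, hzn] at hx; cases hx
  have hzy : z ≠ y := by
    intro h; rw [← h, hzn] at hy; cases hy
  set ν : I → Option O :=
    fun i => if i = x then none else if i = y then some a else if i = z then some b else μ i
    with hν
  have hνx : ν x = none := by simp [hν]
  have hνy : ν y = some a := by simp [hν, Ne.symm hxy]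
  have hνz : ν z = some b := by simp [hν, hzx, hzy]
  have hνo : ∀ j, j ≠ x → j ≠ y → j ≠ z → ν j = μ j := by
    intro j ha1 ha2 ha3; simp [hν, ha1, ha2, ha3]
  have hνm : IsMatching (fun _ : O => 1) ν := by
    apply isMatching_one
    intro o' j k hj hk
    have inj := inj_of_isMatching hm
    have key : ∀ l, ν l = some o' → (l = y ∧ a = o') ∨ (l = z ∧ b = o') ∨
        (l ≠ x ∧ l ≠ y ∧ l ≠ z ∧ μ l = some o') := by
      intro l hl
      by_cases hlx : l = x
      · rw [hlx, hνx] at hl; cases hl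
      · by_cases hly : l = y
        · rw [hly, hνy] at hl; exact Or.inl ⟨hly, Option.some.inj hl⟩
        · by_cases hlz : l = z
          · rw [hlz, hνz] at hl; exact Or.inr (Or.inl ⟨hlz, Option.some.inj hl⟩)
          · rw [hνo l hlx hly hlz] at hl; exact Or.inr (Or.inr ⟨hlx, hly, hlz, hl⟩)
    rcases key j hj with ⟨hj1, hj2⟩ | ⟨hj1, hj2⟩ | ⟨hjx, hjy, hjz, hjm⟩ <;>
      rcases key k hk with ⟨hk1, hk2⟩ | ⟨hk1, hk2⟩ | ⟨hkx, hky, hkz, hkm⟩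
    · rw [hj1, hk1]
    · exact absurd (hj2.trans hk2.symm) hab
    · exact absurd (inj a k x (by rw [hkm, hj2]) hx) hkx
    · exact absurd (hk2.trans hj2.symm) hab
    · rw [hj1, hk1]
    · exact absurd (inj b k y (by rw [hkm, hj2]) hy) hky
    · exact absurd (inj a j x (by rw [hjm, hk2]) hx) hjx
    · exact absurd (inj b j y (by rw [hjm, hk2]) hy) hjy
    · exact inj o' j k hjm hkm
  refine hopt ν hνm ?_
  have hwin_y : Prefers (mkP (τa y) (hτ y)) (ν y) (μ y) := by
    rw [hνy, hy]
    exact pref_some_some (by rw [htaga y hytrio, htagb y hytrio]; omega)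
  have hwin_z : Prefers (mkP (τa z) (hτ z)) (ν z) (μ z) := by
    rw [hνz, hzn]
    exact pref_some_none.mpr (htagb z hztrio).ge
  apply beats_of w hw _ ν μ {y, z} {x}
  · intro i hi
    rcases Finset.mem_insert.mp hi with rfl | hi
    · exact hwin_y
    · rw [Finset.mem_singleton] at hi; subst hi; exact hwin_z
  · intro j hpref
    rw [Finset.mem_singleton]
    by_cases hjx : j = x
    · exact hjx
    · exfalso
      by_cases hjy : j = y
      · subst hjy; exact pref_asymm hwin_y hpref
      · by_cases hjz : j = z
        · subst hjz; exact pref_asymm hwin_z hpref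
        · rw [hνo j hjx hjy hjz] at hpref; exact pref_irrefl hpref
  · rw [Finset.sum_singleton, Finset.sum_pair (Ne.symm hzy)]
    rcases hxtrio with rfl | rfl | rfl <;> rcases hytrio with rfl | rfl | rfl <;>
      rcases hztrio with rfl | rfl | rfl <;>
        first
        | exact absurd rfl hxy
        | exact absurd rfl hzx
        | exact absurd rfl hzy
        | linarith [hw x, hw y, hw z]

noncomputable def tauC (s : ℕ) (C : ℕ → O) (g : I → ℕ) : I → O → ℕ := fun i o =>
  if g i = 0 then (if o = C 0 then 3 else 0)
  else if g i + 2 ≤ s then (if o = C (g i - 1) then 3 else if o = C (g i) then 2 else 0)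
  else if g i ≤ s then (if o = C (s - 2) then 3 else if o = C (s - 1) then 2 else 0)
  else 0

lemma tauC_ne_one (s : ℕ) (C : ℕ → O) (g : I → ℕ) : ∀ i o, tauC s C g i o ≠ 1 := by
  intro i o; unfold tauC; split_ifs <;> omega

lemma chainGadget (w : I → ℝ) (hw : ∀ i, 0 < w i)
    (s : ℕ) (hs : 3 ≤ s)
    (A : ℕ → I) (C : ℕ → O) (g : I → ℕ)
    (hA : ∀ t u, t ≤ s → u ≤ s → A t = A u → t = u)
    (hC : ∀ t u, t < s → u < s → C t = C u → t = u)
    (hgA : ∀ t, t ≤ s → g (A t) = t)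
    (hcov : ∀ i, g i ≤ s → i = A (g i))
    (hv1 : w (A 1) < w (A 0))
    (hmid : ∀ t, 1 ≤ t → t + 2 ≤ s → w (A (t + 1)) < w (A t))
    (hlast : w (A s) < w (A (s - 2)))
    (hsum : w (A 0) < ∑ t ∈ Finset.Icc 1 s, w (A t)) :
    ∃ (P : I → LinearOrder (Option O)) (q : O → ℕ), ValidCaps q ∧
      ∀ μ : I → Option O, ¬ WPopular w P q μ := by
  set τc : I → O → ℕ := tauC s C g with hτc
  have hτ : ∀ i o, τc i o ≠ 1 := tauC_ne_one s C g
  refine ⟨fun i => mkP (τc i) (hτ i), fun _ => 1, fun o => le_refl 1, ?_⟩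
  rintro μ ⟨hm, hopt⟩
  have hacc := phase1 w hw τc hτ μ hm hopt
  have h2 := phase2 w hw τc hτ μ hm hopt
  have inj := inj_of_isMatching hm
  -- tag evaluation lemmas
  have tag0 : ∀ o, τc (A 0) o = (if o = C 0 then 3 else 0) := by
    intro o; rw [hτc]; unfold tauC; rw [hgA 0 (by omega)]; simp
  have tagM : ∀ t, 1 ≤ t → t + 2 ≤ s → ∀ o,
      τc (A t) o = (if o = C (t - 1) then 3 else if o = C t then 2 else 0) := by
    intro t h1 h2' o; rw [hτc]; unfold tauC; rw [hgA t (by omega)]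
    rw [if_neg (by omega), if_pos h2']
  have tagP : ∀ t, s - 1 ≤ t → t ≤ s → ∀ o,
      τc (A t) o = (if o = C (s - 2) then 3 else if o = C (s - 1) then 2 else 0) := by
    intro t h1 h2' o; rw [hτc]; unfold tauC; rw [hgA t h2']
    rw [if_neg (by omega), if_neg (by omega), if_pos h2']
  have tagO : ∀ i, s < g i → ∀ o, τc i o = 0 := by
    intro i hi o; rw [hτc]; unfold tauC
    rw [if_neg (by omega), if_neg (by omega), if_neg (by omega)]
  -- distinctness helpers
  have hAne : ∀ t u, t ≤ s → u ≤ s → t ≠ u → A t ≠ A u := by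
    intro t u ht hu hne heq; exact hne (hA t u ht hu heq)
  have hCne : ∀ t u, t < s → u < s → t ≠ u → C t ≠ C u := by
    intro t u ht hu hne heq; exact hne (hC t u ht hu heq)
  -- who can hold each object
  have holdAnal : ∀ i o, 2 ≤ τc i o → g i ≤ s ∧ i = A (g i) ∧
      ((g i = 0 ∧ o = C 0) ∨
       (1 ≤ g i ∧ g i + 2 ≤ s ∧ (o = C (g i - 1) ∨ o = C (g i))) ∨
       (s - 1 ≤ g i ∧ g i ≤ s ∧ (o = C (s - 2) ∨ o = C (s - 1)))) := by
    intro i o hτo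
    by_cases hg0 : g i = 0
    · have hgs : g i ≤ s := by omega
      refine ⟨hgs, hcov i hgs, Or.inl ⟨hg0, ?_⟩⟩
      have hi0 : i = A 0 := by rw [← hg0]; exact hcov i hgs
      rw [hi0, tag0] at hτo
      by_contra hne; rw [if_neg hne] at hτo; omega
    · by_cases hgm : g i + 2 ≤ s
      · have hgs : g i ≤ s := by omega
        have hiA : i = A (g i) := hcov i hgs
        refine ⟨hgs, hiA, Or.inr (Or.inl ⟨by omega, hgm, ?_⟩)⟩
        rw [hiA, tagM (g i) (by omega) hgm] at hτo
        by_cases ha : o = C (g i - 1)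
        · exact Or.inl ha
        · by_cases hb : o = C (g i)
          · exact Or.inr hb
          · rw [if_neg ha, if_neg hb] at hτo; omega
      · by_cases hgp : g i ≤ s
        · have hiA : i = A (g i) := hcov i hgp
          refine ⟨hgp, hiA, Or.inr (Or.inr ⟨by omega, hgp, ?_⟩)⟩
          rw [hiA, tagP (g i) (by omega) hgp] at hτo
          by_cases ha : o = C (s - 2)
          · exact Or.inl ha
          · by_cases hb : o = C (s - 1)
            · exact Or.inr hb
            · rw [if_neg ha, if_neg hb] at hτo; omega
        · exfalso; rw [tagO i (by omega)] at hτo; omega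
  -- who holds C 0
  have hA0opt : μ (A 0) = none ∨ μ (A 0) = some (C 0) := by
    cases hmu : μ (A 0) with
    | none => exact Or.inl rfl
    | some o =>
        right
        have h := hacc (A 0) o hmu
        rw [tag0 o] at h
        by_cases ho : o = C 0
        · rw [ho]
        · rw [if_neg ho] at h; omega
  by_cases hc0 : μ (A 1) = some (C 0)
  · -- SWAP challenger
    have hA01 : A 0 ≠ A 1 := hAne 0 1 (by omega) (by omega) (by omega)
    have hA0n : μ (A 0) = none := by
      rcases hA0opt with h | h
      · exact h
      · exact absurd (hA 0 1 (by omega) (by omega) (inj (C 0) (A 0) (A 1) h hc0)) (by omega)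
    set ν : I → Option O := Function.update (Function.update μ (A 1) none) (A 0) (some (C 0))
      with hν
    have hν0 : ν (A 0) = some (C 0) := by rw [hν]; simp [Function.update_self]
    have hν1 : ν (A 1) = none := by
      rw [hν, Function.update_of_ne (Ne.symm hA01), Function.update_self]
    have hνo : ∀ j, j ≠ A 0 → j ≠ A 1 → ν j = μ j := by
      intro j hj0 hj1
      rw [hν, Function.update_of_ne hj0, Function.update_of_ne hj1]
    have hνm : IsMatching (fun _ : O => 1) ν := by
      apply isMatching_one
      intro o' j k hj hk
      have key : ∀ l, ν l = some o' → (l = A 0 ∧ C 0 = o') ∨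
          (l ≠ A 0 ∧ l ≠ A 1 ∧ μ l = some o') := by
        intro l hl
        by_cases hl0 : l = A 0
        · rw [hl0, hν0] at hl; exact Or.inl ⟨hl0, Option.some.inj hl⟩
        · by_cases hl1 : l = A 1
          · rw [hl1, hν1] at hl; cases hl
          · rw [hνo l hl0 hl1] at hl; exact Or.inr ⟨hl0, hl1, hl⟩
      rcases key j hj with ⟨hj1, hj2⟩ | ⟨hjx, hjy, hjm⟩ <;>
        rcases key k hk with ⟨hk1, hk2⟩ | ⟨hkx, hky, hkm⟩
      · rw [hj1, hk1]
      · exact absurd (inj (C 0) k (A 1) (by rw [hkm, hj2]) hc0) hky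
      · exact absurd (inj (C 0) j (A 1) (by rw [hjm, hk2]) hc0) hjy
      · exact inj o' j k hjm hkm
    refine hopt ν hνm ?_
    have hwin : Prefers (mkP (τc (A 0)) (hτ (A 0))) (ν (A 0)) (μ (A 0)) := by
      rw [hν0, hA0n]
      apply pref_some_none.mpr
      have : τc (A 0) (C 0) = 3 := by rw [tag0, if_pos rfl]
      omega
    apply beats_of w hw _ ν μ {A 0} {A 1}
    · intro i hi; rw [Finset.mem_singleton] at hi; rw [hi]; exact hwin
    · intro j hpref
      rw [Finset.mem_singleton]
      by_cases hj1 : j = A 1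
      · exact hj1
      · exfalso
        by_cases hj0 : j = A 0
        · rw [hj0] at hpref; exact pref_asymm hwin hpref
        · rw [hνo j hj0 hj1] at hpref; exact pref_irrefl hpref
    · rw [Finset.sum_singleton, Finset.sum_singleton]; exact hv1
  · -- A 0 holds C 0
    have h00 : μ (A 0) = some (C 0) := by
      rcases hA0opt with hA0n | h
      · exfalso
        obtain ⟨h, hh⟩ := h2 (A 0) (C 0) (by
          rw [hA0n]
          apply pref_some_none.mpr
          have : τc (A 0) (C 0) = 3 := by rw [tag0, if_pos rfl]
          omega)
        obtain ⟨hgs, hiA, hcases⟩ := holdAnal h (C 0) (hacc h (C 0) hh)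
        rcases hcases with ⟨hg0, -⟩ | ⟨hg1, hg2, hor⟩ | ⟨hg1, hg2, hor⟩
        · rw [hg0] at hiA; rw [hiA, hA0n] at hh; cases hh
        · rcases hor with ho | ho
          · have he : 0 = g h - 1 := hC 0 (g h - 1) (by omega) (by omega) ho
            have hg1' : g h = 1 := by omega
            rw [hg1'] at hiA; rw [hiA] at hh; exact hc0 hh
          · have : 0 = g h := hC 0 (g h) (by omega) (by omega) ho
            omega
        · rcases hor with ho | ho
          · have : 0 = s - 2 := hC 0 (s - 2) (by omega) (by omega) ho
            omega
          · have : 0 = s - 1 := hC 0 (s - 1) (by omega) (by omega) ho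
            omega
      · exact h
    -- middles hold their second choices
    have hclaim : ∀ t, 1 ≤ t → t + 2 ≤ s → μ (A t) = some (C t) := by
      intro t
      induction t with
      | zero => intro h1 _; omega
      | succ t IH =>
        intro ht1 ht2
        have hprev : μ (A t) = some (C t) ∨ (t = 0 ∧ μ (A t) = some (C 0)) := by
          by_cases ht : t = 0
          · right; exact ⟨ht, by rw [ht]; exact h00⟩
          · left; exact IH (by omega) (by omega)
        have hprev' : μ (A t) = some (C t) := by
          rcases hprev with h | ⟨h0, h⟩
          · exact h
          · rw [h0]; rw [h0] at h; exact h
        have hne1 : C (t + 1) ≠ C t := hCne (t + 1) t (by omega) (by omega) (by omega)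
        have tagMs := tagM (t + 1) (by omega) ht2
        rw [Nat.add_sub_cancel] at tagMs
        cases hmu : μ (A (t + 1)) with
        | some o =>
            have h := hacc (A (t + 1)) o hmu
            rw [tagMs] at h
            by_cases ha : o = C t
            · exfalso
              rw [ha] at hmu
              have := hA (t + 1) t (by omega) (by omega)
                (inj (C t) (A (t + 1)) (A t) hmu hprev')
              omega
            · by_cases hb : o = C (t + 1)
              · rw [hb]
              · exfalso; rw [if_neg ha, if_neg hb] at h; omega
        | none =>
            exfalso
            obtain ⟨h, hh⟩ := h2 (A (t + 1)) (C (t + 1)) (by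
              rw [hmu]
              apply pref_some_none.mpr
              have : τc (A (t + 1)) (C (t + 1)) = 2 := by
                rw [tagMs, if_neg hne1, if_pos rfl]
              omega)
            obtain ⟨hgs, hiA, hcases⟩ := holdAnal h (C (t + 1)) (hacc h (C (t + 1)) hh)
            have hwh : w h < w (A (t + 1)) := by
              rcases hcases with ⟨hg0, ho⟩ | ⟨hg1, hg2, hor⟩ | ⟨hg1, hg2, hor⟩
              · exfalso
                have : t + 1 = 0 := hC (t + 1) 0 (by omega) (by omega) ho
                omega
              · rcases hor with ho | ho
                · have he : t + 1 = g h - 1 := hC (t + 1) (g h - 1) (by omega) (by omega) ho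
                  have hgh : g h = t + 2 := by omega
                  rw [hiA, hgh]
                  have := hmid (t + 1) (by omega) ht2
                  have he2 : t + 1 + 1 = t + 2 := by omega
                  rw [he2] at this; exact this
                · exfalso
                  have he : t + 1 = g h := hC (t + 1) (g h) (by omega) (by omega) ho
                  rw [hiA, ← he, hmu] at hh; cases hh
              · rcases hor with ho | ho
                · have hts : t + 1 = s - 2 := hC (t + 1) (s - 2) (by omega) (by omega) ho
                  by_cases hgh : g h = s
                  · rw [hiA, hgh, hts]; exact hlast
                  · have hgh' : g h = s - 1 := by omega
                    rw [hiA, hgh', hts]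
                    have := hmid (s - 2) (by omega) (by omega)
                    have he : s - 2 + 1 = s - 1 := by omega
                    rw [he] at this; exact this
                · exfalso
                  have : t + 1 = s - 1 := hC (t + 1) (s - 1) (by omega) (by omega) ho
                  omega
            have hhA : h ≠ A (t + 1) := by
              intro he; rw [he, hmu] at hh; cases hh
            set ν : I → Option O :=
              Function.update (Function.update μ h none) (A (t + 1)) (some (C (t + 1)))
              with hν
            have hνt : ν (A (t + 1)) = some (C (t + 1)) := by
              rw [hν]; simp [Function.update_self]
            have hνh : ν h = none := by
              rw [hν, Function.update_of_ne hhA, Function.update_self]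
            have hνo : ∀ j, j ≠ A (t + 1) → j ≠ h → ν j = μ j := by
              intro j hj1 hj2; rw [hν, Function.update_of_ne hj1, Function.update_of_ne hj2]
            have hνm : IsMatching (fun _ : O => 1) ν := by
              apply isMatching_one
              intro o' j k hj hk
              have key : ∀ l, ν l = some o' → (l = A (t + 1) ∧ C (t + 1) = o') ∨
                  (l ≠ A (t + 1) ∧ l ≠ h ∧ μ l = some o') := by
                intro l hl
                by_cases hl0 : l = A (t + 1)
                · rw [hl0, hνt] at hl; exact Or.inl ⟨hl0, Option.some.inj hl⟩
                · by_cases hl1 : l = h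
                  · rw [hl1, hνh] at hl; cases hl
                  · rw [hνo l hl0 hl1] at hl; exact Or.inr ⟨hl0, hl1, hl⟩
              rcases key j hj with ⟨hj1, hj2⟩ | ⟨hjx, hjy, hjm⟩ <;>
                rcases key k hk with ⟨hk1, hk2⟩ | ⟨hkx, hky, hkm⟩
              · rw [hj1, hk1]
              · exact absurd (inj (C (t + 1)) k h (by rw [hkm, hj2]) hh) hky
              · exact absurd (inj (C (t + 1)) j h (by rw [hjm, hk2]) hh) hjy
              · exact inj o' j k hjm hkm
            apply hopt ν hνm
            have hwin : Prefers (mkP (τc (A (t + 1))) (hτ (A (t + 1)))) (ν (A (t + 1)))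
                (μ (A (t + 1))) := by
              rw [hνt, hmu]
              apply pref_some_none.mpr
              have : τc (A (t + 1)) (C (t + 1)) = 2 := by
                rw [tagMs, if_neg hne1, if_pos rfl]
              omega
            apply beats_of w hw _ ν μ {A (t + 1)} {h}
            · intro i hi; rw [Finset.mem_singleton] at hi; rw [hi]; exact hwin
            · intro j hpref
              rw [Finset.mem_singleton]
              by_cases hjh : j = h
              · exact hjh
              · exfalso
                by_cases hj0 : j = A (t + 1)
                · rw [hj0] at hpref; exact pref_asymm hwin hpref
                · rw [hνo j hj0 hjh] at hpref; exact pref_irrefl hpref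
            · rw [Finset.sum_singleton, Finset.sum_singleton]; exact hwh
    -- the pair
    have hm2 : μ (A (s - 2)) = some (C (s - 2)) := hclaim (s - 2) (by omega) (by omega)
    have pairOpt : ∀ t, s - 1 ≤ t → t ≤ s →
        μ (A t) = none ∨ μ (A t) = some (C (s - 1)) := by
      intro t h1 h2'
      cases hmu : μ (A t) with
      | none => exact Or.inl rfl
      | some o =>
          right
          have h := hacc (A t) o hmu
          rw [tagP t h1 h2'] at h
          by_cases ha : o = C (s - 2)
          · exfalso
            rw [ha] at hmu
            have := hA t (s - 2) h2' (by omega) (inj (C (s - 2)) (A t) (A (s - 2)) hmu hm2)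
            omega
          · by_cases hb : o = C (s - 1)
            · rw [hb]
            · exfalso; rw [if_neg ha, if_neg hb] at h; omega
    have tagP2 : τc (A (s - 1)) (C (s - 1)) = 2 := by
      rw [tagP (s - 1) (le_refl _) (by omega),
        if_neg (hCne (s - 1) (s - 2) (by omega) (by omega) (by omega)), if_pos rfl]
    obtain ⟨px, py, hp, hx, hy⟩ : ∃ px py,
        ((px = s - 1 ∧ py = s) ∨ (px = s ∧ py = s - 1)) ∧
          μ (A px) = some (C (s - 1)) ∧ μ (A py) = none := by
      rcases pairOpt (s - 1) (le_refl _) (by omega) with h1' | h1'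
      · obtain ⟨h, hh⟩ := h2 (A (s - 1)) (C (s - 1)) (by
          rw [h1']
          apply pref_some_none.mpr
          omega)
        obtain ⟨hgs, hiA, hcases⟩ := holdAnal h (C (s - 1)) (hacc h (C (s - 1)) hh)
        have hgh : g h = s := by
          rcases hcases with ⟨hg0, ho⟩ | ⟨hg1, hg2, hor⟩ | ⟨hg1, hg2, hor⟩
          · exfalso
            have : s - 1 = 0 := hC (s - 1) 0 (by omega) (by omega) ho
            omega
          · rcases hor with ho | ho
            · have := hC (s - 1) (g h - 1) (by omega) (by omega) ho; omega
            · have := hC (s - 1) (g h) (by omega) (by omega) ho; omega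
          · rcases hor with ho | ho
            · exfalso
              have := hC (s - 1) (s - 2) (by omega) (by omega) ho
              omega
            · by_cases hgh : g h = s
              · exact hgh
              · exfalso
                have hgh' : g h = s - 1 := by omega
                rw [hiA, hgh', h1'] at hh; cases hh
        refine ⟨s, s - 1, Or.inr ⟨rfl, rfl⟩, ?_, h1'⟩
        rw [hiA, hgh] at hh; exact hh
      · have hy' : μ (A s) = none := by
          rcases pairOpt s (by omega) (le_refl s) with h' | h'
          · exact h'
          · exfalso
            have := hA s (s - 1) (le_refl s) (by omega)
              (inj (C (s - 1)) (A s) (A (s - 1)) h' h1')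
            omega
        exact ⟨s - 1, s, Or.inl ⟨rfl, rfl⟩, h1', hy'⟩
    -- ROT challenger
    have hpxb : s - 1 ≤ px ∧ px ≤ s := by rcases hp with ⟨rfl, rfl⟩ | ⟨rfl, rfl⟩ <;> omega
    have hpyb : s - 1 ≤ py ∧ py ≤ s := by rcases hp with ⟨rfl, rfl⟩ | ⟨rfl, rfl⟩ <;> omega
    have hpxy : px ≠ py := by rcases hp with ⟨rfl, rfl⟩ | ⟨rfl, rfl⟩ <;> omega
    have hgx : g (A px) = px := hgA px hpxb.2
    have hgy : g (A py) = py := hgA py hpyb.2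
    have hAyx : A py ≠ A px := hAne py px hpyb.2 hpxb.2 (Ne.symm hpxy)
    set ν : I → Option O := fun i =>
      if g i = 0 then none
      else if i = A px then some (C (s - 2))
      else if i = A py then some (C (s - 1))
      else if g i ≤ s then some (C (g i - 1))
      else μ i
      with hν
    have hν0 : ∀ i, g i = 0 → ν i = none := by
      intro i hi; simp only [hν]; rw [if_pos hi]
    have hνx : ν (A px) = some (C (s - 2)) := by
      simp only [hν]; rw [if_neg (show ¬ g (A px) = 0 by rw [hgx]; omega)]; simp
    have hνy : ν (A py) = some (C (s - 1)) := by
      simp only [hν]; rw [if_neg (show ¬ g (A py) = 0 by rw [hgy]; omega), if_neg hAyx]; simp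
    have hνmid : ∀ t, 1 ≤ t → t + 2 ≤ s → ν (A t) = some (C (t - 1)) := by
      intro t h1' h2'
      simp only [hν]
      rw [hgA t (by omega)]
      rw [if_neg (by omega), if_neg (hAne t px (by omega) hpxb.2 (by omega)),
        if_neg (hAne t py (by omega) hpyb.2 (by omega)), if_pos (by omega)]
    have hνoth : ∀ i, s < g i → ν i = μ i := by
      intro i hi
      simp only [hν]
      rw [if_neg (by omega), if_neg (fun he => by rw [he, hgx] at hi; omega),
        if_neg (fun he => by rw [he, hgy] at hi; omega), if_neg (by omega)]
    have hνm : IsMatching (fun _ : O => 1) ν := by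
      apply isMatching_one
      intro o' j k hj hk
      have key : ∀ l, ν l = some o' → (l = A px ∧ C (s - 2) = o') ∨
          (l = A py ∧ C (s - 1) = o') ∨
          (∃ t, 1 ≤ t ∧ t + 2 ≤ s ∧ l = A t ∧ C (t - 1) = o') := by
        intro l hl
        by_cases hg0 : g l = 0
        · rw [hν0 l hg0] at hl; cases hl
        · by_cases hlx : l = A px
          · rw [hlx, hνx] at hl; exact Or.inl ⟨hlx, Option.some.inj hl⟩
          · by_cases hly : l = A py
            · rw [hly, hνy] at hl; exact Or.inr (Or.inl ⟨hly, Option.some.inj hl⟩)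
            · by_cases hgs : g l ≤ s
              · have hlA : l = A (g l) := hcov l hgs
                have hgl2 : g l + 2 ≤ s := by
                  rcases Nat.lt_or_ge (g l + 2) (s + 1) with h' | h'
                  · omega
                  · exfalso
                    have : g l = s - 1 ∨ g l = s := by omega
                    rcases this with h'' | h''
                    · rcases hp with ⟨hpx1, hpy1⟩ | ⟨hpx1, hpy1⟩
                      · exact hlx (by rw [hlA, h'', ← hpx1])
                      · exact hly (by rw [hlA, h'', ← hpy1])
                    · rcases hp with ⟨hpx1, hpy1⟩ | ⟨hpx1, hpy1⟩
                      · exact hly (by rw [hlA, h'', ← hpy1])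
                      · exact hlx (by rw [hlA, h'', ← hpx1])
                have := hνmid (g l) (by omega) hgl2
                rw [← hlA] at this
                rw [this] at hl
                exact Or.inr (Or.inr ⟨g l, by omega, hgl2, hlA, Option.some.inj hl⟩)
              · exfalso
                rw [hνoth l (by omega)] at hl
                have := hacc l o' hl
                rw [tagO l (by omega)] at this
                omega
      have keyne : ∀ t, 1 ≤ t → t + 2 ≤ s → (C (t - 1) ≠ C (s - 2) ∧ C (t - 1) ≠ C (s - 1)) :=
        fun t h1' h2' => ⟨hCne (t - 1) (s - 2) (by omega) (by omega) (by omega),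
          hCne (t - 1) (s - 1) (by omega) (by omega) (by omega)⟩
      rcases key j hj with ⟨hj1, hj2⟩ | ⟨hj1, hj2⟩ | ⟨tj, htj1, htj2, hj1, hj2⟩ <;>
        rcases key k hk with ⟨hk1, hk2⟩ | ⟨hk1, hk2⟩ | ⟨tk, htk1, htk2, hk1, hk2⟩
      · rw [hj1, hk1]
      · exfalso
        have : C (s - 2) = C (s - 1) := by rw [hj2, ← hk2]
        exact hCne (s - 2) (s - 1) (by omega) (by omega) (by omega) this
      · exfalso
        exact (keyne tk htk1 htk2).1 (by rw [hk2, ← hj2])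
      · exfalso
        have : C (s - 2) = C (s - 1) := by rw [hk2, ← hj2]
        exact hCne (s - 2) (s - 1) (by omega) (by omega) (by omega) this
      · rw [hj1, hk1]
      · exfalso
        exact (keyne tk htk1 htk2).2 (by rw [hk2, ← hj2])
      · exfalso
        exact (keyne tj htj1 htj2).1 (by rw [hj2, ← hk2])
      · exfalso
        exact (keyne tj htj1 htj2).2 (by rw [hj2, ← hk2])
      · have : tj = tk := by
          have : C (tj - 1) = C (tk - 1) := by rw [hj2, ← hk2]
          have := hC (tj - 1) (tk - 1) (by omega) (by omega) this
          omega
        rw [hj1, hk1, this]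
    refine hopt ν hνm ?_
    have hWp : ∀ t, 1 ≤ t → t ≤ s →
        Prefers (mkP (τc (A t)) (hτ (A t))) (ν (A t)) (μ (A t)) := by
      intro t h1' h2'
      by_cases hmidt : t + 2 ≤ s
      · rw [hνmid t h1' hmidt, hclaim t h1' hmidt]
        apply pref_some_some
        have e1 : τc (A t) (C t) = 2 := by
          rw [tagM t h1' hmidt, if_neg (hCne t (t - 1) (by omega) (by omega) (by omega)),
            if_pos rfl]
        have e2 : τc (A t) (C (t - 1)) = 3 := by
          rw [tagM t h1' hmidt, if_pos rfl]
        omega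
      · have htp : t = px ∨ t = py := by
          rcases hp with ⟨rfl, rfl⟩ | ⟨rfl, rfl⟩ <;> omega
        rcases htp with rfl | rfl
        · rw [hνx, hx]
          apply pref_some_some
          have e1 : τc (A t) (C (s - 1)) = 2 := by
            rw [tagP t hpxb.1 hpxb.2,
              if_neg (hCne (s - 1) (s - 2) (by omega) (by omega) (by omega)), if_pos rfl]
          have e2 : τc (A t) (C (s - 2)) = 3 := by
            rw [tagP t hpxb.1 hpxb.2, if_pos rfl]
          omega
        · rw [hνy, hy]
          apply pref_some_none.mpr
          have e1 : τc (A t) (C (s - 1)) = 2 := by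
            rw [tagP t hpyb.1 hpyb.2,
              if_neg (hCne (s - 1) (s - 2) (by omega) (by omega) (by omega)), if_pos rfl]
          omega
    apply beats_of w hw _ ν μ ((Finset.Icc 1 s).image A) {A 0}
    · intro i hi
      obtain ⟨t, ht, rfl⟩ := Finset.mem_image.mp hi
      rw [Finset.mem_Icc] at ht
      exact hWp t ht.1 ht.2
    · intro j hpref
      rw [Finset.mem_singleton]
      by_cases hg0 : g j = 0
      · have := hcov j (by omega)
        rw [hg0] at this; exact this
      · exfalso
        by_cases hgs : g j ≤ s
        · have hjA : j = A (g j) := hcov j hgs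
          have hwin := hWp (g j) (by omega) hgs
          rw [← hjA] at hwin
          exact pref_asymm hwin hpref
        · rw [hνoth j (by omega)] at hpref
          exact pref_irrefl hpref
    · rw [Finset.sum_singleton, Finset.sum_image ?hinj]
      · exact hsum
      case hinj =>
        intro t ht u hu heq
        rw [Finset.mem_coe, Finset.mem_Icc] at ht hu
        exact hA t u ht.2 hu.2 heq

end Aux

/-- If the weights are not cumulatively ordered, some problem has no
w-popular matching. -/
theorem stmt4 {I O : Type} [Fintype I] [Fintype O]
    (hI : 3 ≤ Fintype.card I) (hIO : Fintype.card I ≤ Fintype.card O)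
    (w : I → ℝ) (hw : ∀ i, 0 < w i)
    (e : Fin (Fintype.card I) ≃ I) (he : DecreasingEnum w e)
    (hco : ¬ CumulativelyOrdered w e) :
    ∃ (P : I → LinearOrder (Option O)) (q : O → ℕ), ValidCaps q ∧
      ∀ μ : I → Option O, ¬ WPopular w P q μ := by
  classical
  have hn0 : 0 < Fintype.card I := by omega
  obtain ⟨emb⟩ : Nonempty (I ↪ O) := Function.Embedding.nonempty_of_card_le hIO
  set f : Fin (Fintype.card I) ↪ O := e.toEmbedding.trans emb with hf
  unfold CumulativelyOrdered at hco
  push_neg at hco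
  set S : Finset (Fin (Fintype.card I)) := Finset.univ.filter
    (fun j => w (e j) < ∑ k ∈ Finset.univ.filter (fun k => j < k), w (e k)) with hS
  have hSne : S.Nonempty := by
    obtain ⟨j, hj⟩ := hco
    exact ⟨j, by simp only [hS, Finset.mem_filter, Finset.mem_univ, true_and]; exact hj⟩
  set J : Fin (Fintype.card I) := S.max' hSne with hJdef
  have hJ : w (e J) < ∑ k ∈ Finset.univ.filter (fun k => J < k), w (e k) := by
    have hkey : ∀ x : Fin (Fintype.card I), x ∈ S →
        w (e x) < ∑ k ∈ Finset.univ.filter (fun k => x < k), w (e k) := by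
      intro x hx
      rw [hS, Finset.mem_filter] at hx
      exact hx.2
    exact hkey J (S.max'_mem hSne)
  have htail : ∀ l : Fin (Fintype.card I), J < l →
      ∑ k ∈ Finset.univ.filter (fun k => l < k), w (e k) ≤ w (e l) := by
    intro l hl
    by_contra hcon
    push_neg at hcon
    have hlS : l ∈ S := by
      rw [hS, Finset.mem_filter]; exact ⟨Finset.mem_univ l, hcon⟩
    exact absurd (S.le_max' l hlS) (not_le_of_gt hl)
  have hJ3 : J.val + 3 ≤ (Fintype.card I) := by
    by_contra hcon
    push_neg at hcon
    have hsub : (Finset.univ.filter (fun k => J < k))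
        ⊆ {(⟨(Fintype.card I) - 1, by omega⟩ : Fin (Fintype.card I))} := by
      intro k hk
      rw [Finset.mem_filter] at hk
      rw [Finset.mem_singleton]
      have h1 : J.val < k.val := hk.2
      have h2 : k.val < (Fintype.card I) := k.isLt
      apply Fin.ext
      simp only []
      omega
    have hle : ∑ k ∈ Finset.univ.filter (fun k => J < k), w (e k)
        ≤ w (e ⟨(Fintype.card I) - 1, by omega⟩) := by
      calc ∑ k ∈ Finset.univ.filter (fun k => J < k), w (e k)
          ≤ ∑ k ∈ ({(⟨(Fintype.card I) - 1, by omega⟩ : Fin (Fintype.card I))} : Finset (Fin (Fintype.card I))), w (e k) :=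
            Finset.sum_le_sum_of_subset_of_nonneg hsub (fun i _ _ => (hw (e i)).le)
        _ = w (e ⟨(Fintype.card I) - 1, by omega⟩) := Finset.sum_singleton _ _
    have hmono : w (e ⟨(Fintype.card I) - 1, by omega⟩) ≤ w (e J) := by
      apply he
      show J.val ≤ (Fintype.card I) - 1
      omega
    linarith
  set s : ℕ := (Fintype.card I) - 1 - J.val with hsdef
  have hs2 : 2 ≤ s := by omega
  set A : ℕ → I := fun t => e ⟨(J.val + t) % (Fintype.card I), Nat.mod_lt _ hn0⟩ with hA_def
  set C : ℕ → O := fun t => f ⟨(J.val + 1 + t) % (Fintype.card I), Nat.mod_lt _ hn0⟩ with hC_def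
  have hmodA : ∀ t, t ≤ s → (J.val + t) % (Fintype.card I) = J.val + t :=
    fun t ht => Nat.mod_eq_of_lt (by omega)
  have hmodC : ∀ t, t < s → (J.val + 1 + t) % (Fintype.card I) = J.val + 1 + t :=
    fun t ht => Nat.mod_eq_of_lt (by omega)
  have hAinj : ∀ t u, t ≤ s → u ≤ s → A t = A u → t = u := by
    intro t u ht hu heq
    simp only [hA_def] at heq
    have h1 := congrArg Fin.val (e.injective heq)
    simp only [] at h1
    rw [hmodA t ht, hmodA u hu] at h1
    omega
  have hCinj : ∀ t u, t < s → u < s → C t = C u → t = u := by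
    intro t u ht hu heq
    simp only [hC_def] at heq
    have h1 := congrArg Fin.val (f.injective heq)
    simp only [] at h1
    rw [hmodC t ht, hmodC u hu] at h1
    omega
  have hAeJ : A 0 = e J := by
    simp only [hA_def]
    apply congrArg e
    apply Fin.ext
    simp only []
    rw [hmodA 0 (by omega)]
    omega
  set g : I → ℕ :=
    fun i => if (e.symm i).val < J.val then (Fintype.card I) else (e.symm i).val - J.val with hg_def
  have hgA : ∀ t, t ≤ s → g (A t) = t := by
    intro t ht
    simp only [hg_def, hA_def]
    simp only [Equiv.symm_apply_apply]
    rw [hmodA t ht, if_neg (by omega)]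
    omega
  have hcov : ∀ i, g i ≤ s → i = A (g i) := by
    intro i hgi
    simp only [hg_def] at hgi ⊢
    by_cases hidx : (e.symm i).val < J.val
    · rw [if_pos hidx] at hgi; omega
    · rw [if_neg hidx] at hgi ⊢
      simp only [hA_def]
      have hval : J.val + ((e.symm i).val - J.val) = (e.symm i).val := by omega
      have hid : (J.val + ((e.symm i).val - J.val)) % (Fintype.card I) = (e.symm i).val := by
        rw [hval, Nat.mod_eq_of_lt (e.symm i).isLt]
      have hfin : (⟨(J.val + ((e.symm i).val - J.val)) % (Fintype.card I), Nat.mod_lt _ hn0⟩ : Fin (Fintype.card I))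
          = e.symm i := Fin.ext hid
      rw [hfin, e.apply_symm_apply]
  have hdec : ∀ t u, t ≤ u → u ≤ s → w (A u) ≤ w (A t) := by
    intro t u htu hu
    simp only [hA_def]
    apply he
    show (J.val + t) % (Fintype.card I) ≤ (J.val + u) % (Fintype.card I)
    rw [hmodA t (by omega), hmodA u hu]
    omega
  have himg : Finset.univ.filter (fun k => J < k) =
      (Finset.Icc 1 s).image
        (fun t => (⟨(J.val + t) % (Fintype.card I), Nat.mod_lt _ hn0⟩ : Fin (Fintype.card I))) := by
    ext k
    simp only [Finset.mem_filter, Finset.mem_univ, true_and, Finset.mem_image,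
      Finset.mem_Icc]
    constructor
    · intro hk
      have hk1 : J.val < k.val := hk
      have hk2 : k.val < (Fintype.card I) := k.isLt
      refine ⟨k.val - J.val, ⟨by omega, by omega⟩, ?_⟩
      apply Fin.ext
      simp only []
      rw [Nat.mod_eq_of_lt (by omega)]
      omega
    · rintro ⟨t, ⟨ht1, ht2⟩, rfl⟩
      show J.val < (J.val + t) % (Fintype.card I)
      rw [hmodA t ht2]
      omega
  have hsumIcc : w (A 0) < ∑ t ∈ Finset.Icc 1 s, w (A t) := by
    rw [hAeJ]
    calc w (e J) < ∑ k ∈ Finset.univ.filter (fun k => J < k), w (e k) := hJ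
      _ = ∑ t ∈ Finset.Icc 1 s, w (e ⟨(J.val + t) % (Fintype.card I), Nat.mod_lt _ hn0⟩) := by
          rw [himg]
          apply Finset.sum_image
          intro t ht u hu heq
          rw [Finset.mem_coe, Finset.mem_Icc] at ht hu
          have h1 := congrArg Fin.val heq
          simp only [] at h1
          rw [hmodA t ht.2, hmodA u hu.2] at h1
          omega
      _ = ∑ t ∈ Finset.Icc 1 s, w (A t) := by simp only [hA_def]
  by_cases hcase : w (A 0) < w (A 1) + w (A 2)
  · exact gadgetA w hw (A 0) (A 1) (A 2)
      (fun h => by have := hAinj 0 1 (by omega) (by omega) h; omega)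
      (fun h => by have := hAinj 0 2 (by omega) (by omega) h; omega)
      (fun h => by have := hAinj 1 2 (by omega) (by omega) h; omega)
      (C 0) (C 1)
      (fun h => by have := hCinj 0 1 (by omega) (by omega) h; omega)
      hcase (hdec 0 1 (by omega) (by omega)) (hdec 1 2 (by omega) hs2)
  · push_neg at hcase
    have hs3 : 3 ≤ s := by
      by_contra hcon
      have hseq : s = 2 := by omega
      rw [hseq] at hsumIcc
      rw [show (Finset.Icc 1 2 : Finset ℕ) = {1, 2} from by decide] at hsumIcc
      rw [Finset.sum_pair (by omega : (1 : ℕ) ≠ 2)] at hsumIcc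
      linarith
    have keyH : ∀ t u, 1 ≤ t → t < u → u < s → w (A u) + w (A s) ≤ w (A t) := by
      intro t u h1 h2 h3
      have hJt : J < (⟨(J.val + t) % (Fintype.card I), Nat.mod_lt _ hn0⟩ : Fin (Fintype.card I)) := by
        show J.val < (J.val + t) % (Fintype.card I)
        rw [hmodA t (by omega)]
        omega
      have htl := htail _ hJt
      have hne : (⟨(J.val + u) % (Fintype.card I), Nat.mod_lt _ hn0⟩ : Fin (Fintype.card I))
          ≠ (⟨(J.val + s) % (Fintype.card I), Nat.mod_lt _ hn0⟩ : Fin (Fintype.card I)) := by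
        intro hcontra
        have h4 := congrArg Fin.val hcontra
        simp only [] at h4
        rw [hmodA u (by omega), hmodA s (le_refl s)] at h4
        omega
      have hpair : ({(⟨(J.val + u) % (Fintype.card I), Nat.mod_lt _ hn0⟩ : Fin (Fintype.card I)),
          (⟨(J.val + s) % (Fintype.card I), Nat.mod_lt _ hn0⟩ : Fin (Fintype.card I))} : Finset (Fin (Fintype.card I)))
          ⊆ Finset.univ.filter
            (fun k => (⟨(J.val + t) % (Fintype.card I), Nat.mod_lt _ hn0⟩ : Fin (Fintype.card I)) < k) := by
        intro k hk
        rw [Finset.mem_insert, Finset.mem_singleton] at hk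
        rw [Finset.mem_filter]
        refine ⟨Finset.mem_univ k, ?_⟩
        rcases hk with rfl | rfl
        · show (J.val + t) % (Fintype.card I) < (J.val + u) % (Fintype.card I)
          rw [hmodA t (by omega), hmodA u (by omega)]
          omega
        · show (J.val + t) % (Fintype.card I) < (J.val + s) % (Fintype.card I)
          rw [hmodA t (by omega), hmodA s (le_refl s)]
          omega
      have hsumpair := Finset.sum_le_sum_of_subset_of_nonneg hpair
        (fun i _ _ => (hw (e i)).le)
      rw [Finset.sum_pair hne] at hsumpair
      calc w (A u) + w (A s)
          = w (e ⟨(J.val + u) % (Fintype.card I), Nat.mod_lt _ hn0⟩)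
            + w (e ⟨(J.val + s) % (Fintype.card I), Nat.mod_lt _ hn0⟩) := by simp only [hA_def]
        _ ≤ ∑ k ∈ Finset.univ.filter
              (fun k => (⟨(J.val + t) % (Fintype.card I), Nat.mod_lt _ hn0⟩ : Fin (Fintype.card I)) < k), w (e k) :=
            hsumpair
        _ ≤ w (e ⟨(J.val + t) % (Fintype.card I), Nat.mod_lt _ hn0⟩) := htl
        _ = w (A t) := by simp only [hA_def]
    exact chainGadget w hw s hs3 A C g hAinj hCinj hgA hcov
      (by linarith [hw (A 2)])
      (fun t h1 h2 => by
        have := keyH t (t + 1) h1 (by omega) (by omega)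
        linarith [hw (A s)])
      (by
        have := keyH (s - 2) (s - 1) (by omega) (by omega) (by omega)
        linarith [hw (A (s - 1))])
      hsumIcc
end

section
/- Suppose the weight profile w is not cumulatively ordered. Then in the problem where every object has capacity 1 and every agent has the same strict preference ranking, listing all m objects as acceptable in a common fixed order a_1 P a_2 P ⋯ P a_m P ∅, no w-popular matching exists. -/
open scoped Classical

/-- Auxiliary: unit-capacity matchings are exactly the "injective on somes" assignments. -/
lemma isMatching_one_iff' {I O : Type} [Fintype I] (μ : I → Option O) :
    IsMatching (fun _ : O => 1) μ ↔
      ∀ ⦃i i' : I⦄ ⦃a : O⦄, μ i = some a → μ i' = some a → i = i' := by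
  constructor
  · intro h i i' a hi hi'
    exact Finset.card_le_one.mp (h a) i (by simp [hi]) i' (by simp [hi'])
  · intro h a
    exact Finset.card_le_one.mpr fun i hi i' hi' =>
      h (Finset.mem_filter.mp hi).2 (Finset.mem_filter.mp hi').2

/-- If the weights are not cumulatively ordered, then in the problem with unit
capacities and identical preferences ranking all objects acceptable in a common fixed order,
no w-popular matching exists. -/
theorem stmt5 {I O : Type} [Fintype I] [Fintype O]
    (hI : 3 ≤ Fintype.card I) (hIO : Fintype.card I ≤ Fintype.card O)
    (w : I → ℝ) (hw : ∀ i, 0 < w i)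
    (e : Fin (Fintype.card I) ≃ I) (he : DecreasingEnum w e)
    (hco : ¬ CumulativelyOrdered w e)
    (p : LinearOrder (Option O)) (hp : ∀ a : O, p.lt none (some a)) :
    ∀ μ : I → Option O, ¬ WPopular w (fun _ => p) (fun _ => 1) μ := by
  letI : LinearOrder (Option O) := p
  intro μ hpop
  obtain ⟨hmatch, hbest⟩ := hpop
  have hmu_inj' : ∀ ⦃i i' : I⦄ ⦃a : O⦄, μ i = some a → μ i' = some a → i = i' :=
    (isMatching_one_iff' μ).mp hmatch
  -- Step 1: non-wastefulness
  have hfree : ∀ (i : I) (a : O), (∀ i', μ i' ≠ some a) → ¬ μ i < some a := by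
    intro i a hfa hlt
    set μ' := Function.update μ i (some a) with hμ'
    have hm' : IsMatching (fun _ : O => 1) μ' := by
      rw [isMatching_one_iff']
      intro i1 i2 b h1 h2
      by_cases e1 : i1 = i <;> by_cases e2 : i2 = i
      · rw [e1, e2]
      · exfalso
        rw [hμ', e1, Function.update_self] at h1
        rw [hμ', Function.update_of_ne e2] at h2
        exact hfa i2 (h2.trans (by rw [← Option.some_inj.mp h1]))
      · exfalso
        rw [hμ', e2, Function.update_self] at h2
        rw [hμ', Function.update_of_ne e1] at h1
        exact hfa i1 (h1.trans (by rw [← Option.some_inj.mp h2]))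
      · rw [hμ', Function.update_of_ne e1] at h1
        rw [hμ', Function.update_of_ne e2] at h2
        exact hmu_inj' h1 h2
    apply hbest μ' hm'
    show (∑ x ∈ Finset.univ.filter fun x : I => Prefers p (μ x) (μ' x), w x)
        < ∑ x ∈ Finset.univ.filter fun x : I => Prefers p (μ' x) (μ x), w x
    have h1 : (Finset.univ.filter fun x : I => Prefers p (μ x) (μ' x)) = ∅ := by
      apply Finset.filter_eq_empty_iff.mpr
      intro x _
      by_cases hx : x = i
      · subst hx
        rw [hμ', Function.update_self]
        exact fun hcon => absurd hlt (lt_asymm hcon)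
      · rw [hμ', Function.update_of_ne hx]
        exact lt_irrefl _
    have h2 : (Finset.univ.filter fun x : I => Prefers p (μ' x) (μ x)) = {i} := by
      ext x
      simp only [Finset.mem_filter, Finset.mem_univ, true_and, Finset.mem_singleton]
      constructor
      · intro hx
        by_contra hxi
        rw [hμ', Function.update_of_ne hxi] at hx
        exact lt_irrefl _ hx
      · intro hx
        subst hx
        rw [hμ', Function.update_self]
        exact hlt
    rw [h1, h2, Finset.sum_empty, Finset.sum_singleton]
    exact hw i
  -- Step 2: everyone is matched
  have hsome : ∀ i, μ i ≠ none := by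
    intro i hnone
    have hex_free : ∃ a : O, ∀ i', μ i' ≠ some a := by
      by_contra hcon
      push_neg at hcon
      choose f hf using hcon
      have hfinj : Function.Injective f := by
        intro a b hab
        have : (some a : Option O) = some b := by rw [← hf a, hab, hf b]
        exact Option.some_injective _ this
      have h1 : Fintype.card O ≤ (Finset.univ.erase i).card := by
        rw [← Finset.card_univ]
        apply Finset.card_le_card_of_injOn f _ hfinj.injOn
        intro a _
        refine Finset.mem_erase.mpr ⟨?_, Finset.mem_univ _⟩
        intro hfa
        have := hf a
        rw [hfa, hnone] at this
        exact Option.some_ne_none a this.symm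
      have h2 : (Finset.univ.erase i).card = Fintype.card I - 1 := by
        rw [Finset.card_erase_of_mem (Finset.mem_univ i), Finset.card_univ]
      omega
    obtain ⟨a, hfa⟩ := hex_free
    exact hfree i a hfa (by rw [hnone]; exact hp a)
  have hinj : Function.Injective μ := by
    intro i i' h
    cases hμi : μ i with
    | none => exact absurd hμi (hsome i)
    | some a => exact hmu_inj' hμi (h ▸ hμi)
  -- Step 3: no weight inversion
  have hswap : ∀ i i', w i' < w i → ¬ μ i < μ i' := by
    intro i i' hlt hpl
    have hii' : i ≠ i' := fun h => by rw [h] at hlt; exact lt_irrefl _ hlt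
    set μ' := μ ∘ (Equiv.swap i i') with hμ'
    have hm' : IsMatching (fun _ : O => 1) μ' := by
      rw [isMatching_one_iff']
      intro i1 i2 b h1 h2
      exact (Equiv.swap i i').injective (hinj (h1.trans h2.symm))
    apply hbest μ' hm'
    show (∑ x ∈ Finset.univ.filter fun x : I => Prefers p (μ x) (μ' x), w x)
        < ∑ x ∈ Finset.univ.filter fun x : I => Prefers p (μ' x) (μ x), w x
    have hμ'i : μ' i = μ i' := by rw [hμ']; simp [Equiv.swap_apply_left]
    have hμ'i' : μ' i' = μ i := by rw [hμ']; simp [Equiv.swap_apply_right]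
    have hμ'x : ∀ x, x ≠ i → x ≠ i' → μ' x = μ x := by
      intro x hx hx'
      rw [hμ']; simp [Equiv.swap_apply_of_ne_of_ne hx hx']
    have h1 : (Finset.univ.filter fun x : I => Prefers p (μ x) (μ' x)) = {i'} := by
      ext x
      simp only [Finset.mem_filter, Finset.mem_univ, true_and, Finset.mem_singleton]
      constructor
      · intro hx
        by_cases hxi : x = i
        · exfalso; subst hxi
          rw [hμ'i] at hx
          exact absurd hpl (lt_asymm hx)
        · by_contra hxi'
          rw [hμ'x x hxi hxi'] at hx
          exact lt_irrefl _ hx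
      · intro hx; subst hx
        rw [hμ'i']
        exact hpl
    have h2 : (Finset.univ.filter fun x : I => Prefers p (μ' x) (μ x)) = {i} := by
      ext x
      simp only [Finset.mem_filter, Finset.mem_univ, true_and, Finset.mem_singleton]
      constructor
      · intro hx
        by_cases hxi : x = i
        · exact hxi
        · exfalso
          by_cases hxi' : x = i'
          · subst hxi'
            rw [hμ'i'] at hx
            exact absurd hpl (lt_asymm hx)
          · rw [hμ'x x hxi hxi'] at hx
            exact lt_irrefl _ hx
      · intro hx; subst hx
        rw [hμ'i]
        exact hpl
    rw [h1, h2, Finset.sum_singleton, Finset.sum_singleton]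
    exact hlt
  -- Step 4: rank function and sorted enumeration
  set M := Fintype.card (Option O) with hM
  set ρ : Option O → ℕ := fun x => (Finset.univ.filter fun y => y ≤ x).card with hρdef
  have hρ_le : ∀ x, ρ x ≤ M := by
    intro x
    rw [hρdef, hM, ← Finset.card_univ]
    exact Finset.card_filter_le _ _
  have hρ_lt : ∀ x y : Option O, x < y → ρ x < ρ y := by
    intro x y hxy
    apply Finset.card_lt_card
    refine (Finset.ssubset_iff_of_subset ?_).mpr ⟨y, by simp, by simp [not_le.mpr hxy]⟩
    intro z hz
    simp only [Finset.mem_filter, Finset.mem_univ, true_and] at hz ⊢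
    exact hz.trans hxy.le
  have hρ_rev : ∀ x y : Option O, ρ x < ρ y → x < y := by
    intro x y h
    rcases lt_trichotomy x y with h' | h' | h'
    · exact h'
    · subst h'; omega
    · exact absurd (hρ_lt _ _ h') (by omega)
  set f' : Fin (Fintype.card I) → ℕ := fun k => M - ρ (μ (e k)) with hf'def
  set σ : Equiv.Perm (Fin (Fintype.card I)) := Tuple.sort f' with hσdef
  set e' : Fin (Fintype.card I) ≃ I := σ.trans e with he'def
  have he'app : ∀ k, e' k = e (σ k) := fun k => rfl
  have hf'inj : Function.Injective f' := by
    intro k l h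
    by_contra hne
    have hρeq : ρ (μ (e k)) = ρ (μ (e l)) := by
      have h1 := hρ_le (μ (e k)); have h2 := hρ_le (μ (e l))
      rw [hf'def] at h
      simp only at h
      omega
    have hne' : μ (e k) ≠ μ (e l) := fun hc => hne (e.injective (hinj hc))
    rcases lt_trichotomy (μ (e k)) (μ (e l)) with h' | h' | h'
    · exact absurd (hρ_lt _ _ h') (by omega)
    · exact hne' h'
    · exact absurd (hρ_lt _ _ h') (by omega)
  have hsorted : StrictMono (f' ∘ σ) :=
    (Tuple.monotone_sort f').strictMono_of_injective (hf'inj.comp σ.injective)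
  have hν : ∀ k l : Fin (Fintype.card I), k < l → μ (e' l) < μ (e' k) := by
    intro k l h
    apply hρ_rev
    have := hsorted h
    have h1 := hρ_le (μ (e (σ k))); have h2 := hρ_le (μ (e (σ l)))
    simp only [Function.comp_apply, hf'def] at this
    rw [he'app, he'app]
    omega
  have hcomp : ∀ k l : Fin (Fintype.card I), μ (e' l) < μ (e' k) ↔ k < l := by
    intro k l
    constructor
    · intro h
      rcases lt_trichotomy k l with h' | h' | h'
      · exact h'
      · subst h'; exact absurd h (lt_irrefl _)
      · exact absurd (hν l k h') (lt_asymm h)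
    · exact hν k l
  -- Step 5: weights along e' are weakly decreasing
  have hwe'mono : ∀ k l : Fin (Fintype.card I), k ≤ l → w (e' l) ≤ w (e' k) := by
    intro k l hkl
    rcases eq_or_lt_of_le hkl with h | h
    · rw [h]
    · by_contra hcon
      push_neg at hcon
      exact hswap (e' l) (e' k) hcon (hν k l h)
  -- Step 6: weights along e' coincide with weights along e
  have hw_eq : ∀ k, w (e' k) = w (e k) := by
    have hmono1 : Monotone fun k : Fin (Fintype.card I) => -w (e k) := by
      intro a b hab
      simp only [neg_le_neg_iff]
      exact he a b hab
    have hmono2 : Monotone ((fun k : Fin (Fintype.card I) => -w (e k)) ∘ σ) := by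
      intro a b hab
      simp only [Function.comp_apply, neg_le_neg_iff]
      have := hwe'mono a b hab
      rwa [he'app, he'app] at this
    have hmono3 : Monotone ((fun k : Fin (Fintype.card I) => -w (e k)) ∘ (Equiv.refl (Fin (Fintype.card I)))) := by
      simpa using hmono1
    have huniq := Tuple.unique_monotone hmono2 hmono3
    intro k
    have := congrFun huniq k
    simp only [Function.comp_apply, Equiv.refl_apply, neg_inj] at this
    rw [he'app]
    exact this
  -- Step 7: the witness of non-cumulative ordering, transferred to e'
  rw [CumulativelyOrdered] at hco
  push_neg at hco
  obtain ⟨j, hj⟩ := hco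
  have hj' : w (e' j) < ∑ k ∈ Finset.univ.filter fun k : Fin (Fintype.card I) => j < k, w (e' k) := by
    rw [hw_eq j]
    calc w (e j) < ∑ k ∈ Finset.univ.filter fun k : Fin (Fintype.card I) => j < k, w (e k) := hj
    _ = ∑ k ∈ Finset.univ.filter fun k : Fin (Fintype.card I) => j < k, w (e' k) :=
        Finset.sum_congr rfl fun k _ => (hw_eq k).symm
  -- Step 8: j is not the last index
  have hjn : (j : ℕ) + 1 < Fintype.card I := by
    by_contra hcon
    push_neg at hcon
    have hemp : (Finset.univ.filter fun k : Fin (Fintype.card I) => j < k) = ∅ := by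
      apply Finset.filter_eq_empty_iff.mpr
      intro k _
      have := k.isLt
      rw [Fin.lt_def]
      omega
    rw [hemp, Finset.sum_empty] at hj'
    exact absurd hj' (not_lt.mpr (hw (e' j)).le)
  -- Step 9: the shifting map t
  set t : Fin (Fintype.card I) → Fin (Fintype.card I) := fun k =>
    ⟨if (k : ℕ) < (j : ℕ) then (k : ℕ) else if (k : ℕ) = (j : ℕ) then Fintype.card I - 1 else (k : ℕ) - 1,
      by have := k.isLt; split_ifs <;> omega⟩ with htdef
  have htval : ∀ k : Fin (Fintype.card I), ((t k : Fin (Fintype.card I)) : ℕ) =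
      if (k : ℕ) < (j : ℕ) then (k : ℕ) else if (k : ℕ) = (j : ℕ) then Fintype.card I - 1 else (k : ℕ) - 1 :=
    fun k => rfl
  have ht_lt : ∀ k : Fin (Fintype.card I), t k < k ↔ j < k := by
    intro k
    have hk := k.isLt
    rw [Fin.lt_def, Fin.lt_def, htval k]
    split_ifs <;> omega
  have ht_gt : ∀ k : Fin (Fintype.card I), k < t k ↔ k = j := by
    intro k
    have hk := k.isLt
    rw [Fin.lt_def, Fin.ext_iff, htval k]
    split_ifs <;> omega
  have ht_inj : Function.Injective t := by
    intro k l hkl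
    have hk := k.isLt; have hl := l.isLt
    have hv := congrArg Fin.val hkl
    rw [htval k, htval l] at hv
    apply Fin.ext
    split_ifs at hv <;> omega
  -- Step 10: the beating matching μ'
  set μ' : I → Option O := fun i => μ (e' (t (e'.symm i))) with hμ'def
  have hm' : IsMatching (fun _ : O => 1) μ' := by
    rw [isMatching_one_iff']
    intro i1 i2 b h1 h2
    have := ht_inj (e'.injective (hinj (h1.trans h2.symm)))
    exact e'.symm.injective this
  apply hbest μ' hm'
  show (∑ x ∈ Finset.univ.filter fun x : I => Prefers p (μ x) (μ' x), w x)
      < ∑ x ∈ Finset.univ.filter fun x : I => Prefers p (μ' x) (μ x), w x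
  have hμ'e' : ∀ k : Fin (Fintype.card I), μ' (e' k) = μ (e' (t k)) := by
    intro k
    rw [hμ'def]
    simp only [Equiv.symm_apply_apply]
  have himp : ∀ k : Fin (Fintype.card I), Prefers p (μ' (e' k)) (μ (e' k)) ↔ j < k := by
    intro k
    have : Prefers p (μ' (e' k)) (μ (e' k)) ↔ μ (e' k) < μ (e' (t k)) := by
      rw [hμ'e' k]; exact Iff.rfl
    rw [this, hcomp (t k) k, ht_lt k]
  have hworse : ∀ k : Fin (Fintype.card I), Prefers p (μ (e' k)) (μ' (e' k)) ↔ k = j := by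
    intro k
    have : Prefers p (μ (e' k)) (μ' (e' k)) ↔ μ (e' (t k)) < μ (e' k) := by
      rw [hμ'e' k]; exact Iff.rfl
    rw [this, hcomp k (t k), ht_gt k]
  have hsum1 : (∑ x ∈ Finset.univ.filter fun x : I => Prefers p (μ x) (μ' x), w x)
      = w (e' j) := by
    rw [Finset.sum_filter, ← Equiv.sum_comp e'
      (fun x => if Prefers p (μ x) (μ' x) then w x else 0)]
    rw [Finset.sum_congr rfl fun k _ => if_congr (hworse k) rfl rfl]
    simp
  have hsum2 : (∑ x ∈ Finset.univ.filter fun x : I => Prefers p (μ' x) (μ x), w x)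
      = ∑ k ∈ Finset.univ.filter fun k : Fin (Fintype.card I) => j < k, w (e' k) := by
    rw [Finset.sum_filter, ← Equiv.sum_comp e'
      (fun x => if Prefers p (μ' x) (μ x) then w x else 0)]
    rw [Finset.sum_congr rfl fun k _ => if_congr (himp k) rfl rfl]
    rw [Finset.sum_filter]
  rw [hsum1, hsum2]
  exact hj'
end

section
/- A popular matching may not exist: there exists a problem (P, q) for which no popular matching exists. -/
open scoped Classical

section Stmt6Aux

variable {O : Type} [Fintype O]

noncomputable def rk (x : O) : ℕ := (Fintype.equivFin O x : ℕ)

lemma rk_lt (x : O) : rk x < Fintype.card O := (Fintype.equivFin O x).isLt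

lemma rk_inj : Function.Injective (rk (O := O)) := fun x y h =>
  (Fintype.equivFin O).injective (Fin.ext h)

/-- rank function for the "good" preference a > b > c > none > rest. -/
noncomputable def fgood (a b c : O) : Option O → ℕ := fun v =>
  match v with
  | none => Fintype.card O
  | some x => if x = a then Fintype.card O + 3 else if x = b then Fintype.card O + 2
      else if x = c then Fintype.card O + 1 else rk x

/-- rank function for the "bad" preference: nothing acceptable. -/
noncomputable def fbad : Option O → ℕ := fun v =>
  match v with
  | none => Fintype.card O
  | some x => rk x

lemma fgood_inj {a b c : O} : Function.Injective (fgood a b c) := by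
  intro v w h
  cases v with
  | none =>
    cases w with
    | none => rfl
    | some y =>
      have hy := rk_lt y
      simp only [fgood] at h
      split_ifs at h <;> omega
  | some x =>
    cases w with
    | none =>
      have hx := rk_lt x
      simp only [fgood] at h
      split_ifs at h <;> omega
    | some y =>
      have hx := rk_lt x
      have hy := rk_lt y
      simp only [fgood] at h
      split_ifs at h <;>
        first
          | omega
          | (subst_vars; rfl)
          | exact congrArg some (rk_inj h)

lemma fbad_inj : Function.Injective (fbad (O := O)) := by
  intro v w h
  cases v with
  | none =>
    cases w with
    | none => rfl
    | some y => have := rk_lt y; simp only [fbad] at h; omega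
  | some x =>
    cases w with
    | none => have := rk_lt x; simp only [fbad] at h; omega
    | some y =>
      simp only [fbad] at h
      exact congrArg some (rk_inj h)

lemma fbad_le (v : Option O) : fbad v ≤ Fintype.card O := by
  cases v with
  | none => simp [fbad]
  | some x => exact le_of_lt (rk_lt x)

lemma fgood_le {a b c : O} {v : Option O} (hva : v ≠ some a) (hvb : v ≠ some b)
    (hvc : v ≠ some c) : fgood a b c v ≤ Fintype.card O := by
  cases v with
  | none => simp [fgood]
  | some x =>
    have hx := rk_lt x
    have h1 : x ≠ a := fun h => hva (by rw [h])
    have h2 : x ≠ b := fun h => hvb (by rw [h])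
    have h3 : x ≠ c := fun h => hvc (by rw [h])
    simp only [fgood, if_neg h1, if_neg h2, if_neg h3]
    omega

lemma fgood_a {a b c : O} : fgood a b c (some a) = Fintype.card O + 3 := by
  simp [fgood]

lemma fgood_b {a b c : O} (hba : b ≠ a) : fgood a b c (some b) = Fintype.card O + 2 := by
  simp [fgood, if_neg hba]

lemma fgood_c {a b c : O} (hca : c ≠ a) (hcb : c ≠ b) :
    fgood a b c (some c) = Fintype.card O + 1 := by
  simp [fgood, if_neg hca, if_neg hcb]

end Stmt6Aux

/-- A popular matching may not exist. -/
theorem stmt6 {I O : Type} [Fintype I] [Fintype O]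
    (hI : 3 ≤ Fintype.card I) (hIO : Fintype.card I ≤ Fintype.card O) :
    ∃ (P : I → LinearOrder (Option O)) (q : O → ℕ), ValidCaps q ∧
      ∀ μ : I → Option O, ¬ Popular P q μ := by
  classical
  obtain ⟨eI⟩ := Function.Embedding.nonempty_of_card_le
    (show Fintype.card (Fin 3) ≤ Fintype.card I by simpa using hI)
  obtain ⟨eO⟩ := Function.Embedding.nonempty_of_card_le
    (show Fintype.card (Fin 3) ≤ Fintype.card O by simpa using le_trans hI hIO)
  have hi12 : eI 0 ≠ eI 1 := fun h => absurd (eI.injective h) (by decide)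
  have hi13 : eI 0 ≠ eI 2 := fun h => absurd (eI.injective h) (by decide)
  have hi23 : eI 1 ≠ eI 2 := fun h => absurd (eI.injective h) (by decide)
  set a : O := eO 0 with hadef
  set b : O := eO 1 with hbdef
  set c : O := eO 2 with hcdef
  have hab : a ≠ b := by
    rw [hadef, hbdef]; exact fun h => absurd (eO.injective h) (by decide)
  have hac : a ≠ c := by
    rw [hadef, hcdef]; exact fun h => absurd (eO.injective h) (by decide)
  have hbc : b ≠ c := by
    rw [hbdef, hcdef]; exact fun h => absurd (eO.injective h) (by decide)
  set Pg : LinearOrder (Option O) := LinearOrder.lift' (fgood a b c) fgood_inj with hPgdef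
  set Pb : LinearOrder (Option O) := LinearOrder.lift' fbad fbad_inj with hPbdef
  set inT : I → Prop := fun i => i = eI 0 ∨ i = eI 1 ∨ i = eI 2 with hinTdef
  set P : I → LinearOrder (Option O) := fun i => if inT i then Pg else Pb with hPdef
  refine ⟨P, fun _ => 1, fun _ => le_refl 1, fun μ hμ => ?_⟩
  obtain ⟨hmatch, hpop⟩ := hμ
  have hPg : ∀ i : I, inT i → P i = Pg := fun i hi => if_pos hi
  have hPb : ∀ i : I, ¬ inT i → P i = Pb := fun i hi => if_neg hi
  have prefg : ∀ x y : Option O, Prefers Pg x y ↔ fgood a b c y < fgood a b c x :=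
    fun _ _ => Iff.rfl
  have prefb : ∀ x y : Option O, Prefers Pb x y ↔ fbad y < fbad x := fun _ _ => Iff.rfl
  have fgood_none : fgood a b c none = Fintype.card O := rfl
  have fbad_none : fbad (O := O) none = Fintype.card O := rfl
  have huniq : ∀ (o : O) (i i' : I), μ i = some o → μ i' = some o → i = i' := by
    intro o i i' hi hi'
    exact Finset.card_le_one.mp (hmatch o) i
      (Finset.mem_filter.mpr ⟨Finset.mem_univ _, hi⟩) i'
      (Finset.mem_filter.mpr ⟨Finset.mem_univ _, hi'⟩)
  -- Case 2 helper: some x ∈ {a,b,c} is unassigned within T, and some j ∈ T holds trash.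
  have case2 : ∀ x : O, Fintype.card O + 1 ≤ fgood a b c (some x) →
      (∀ i, inT i → μ i ≠ some x) →
      ∀ j : I, inT j → μ j ≠ some a → μ j ≠ some b → μ j ≠ some c → False := by
    intro x hxval hxfree j hjT hja hjb hjc
    set μ' : I → Option O := fun i => if i = j then some x else if inT i then μ i else none
      with hμ'def
    have hμ'match : IsMatching (fun _ => 1) μ' := by
      intro o
      rw [Finset.card_le_one]
      intro u hu v hv
      simp only [Finset.mem_filter, Finset.mem_univ, true_and] at hu hv
      by_cases ho : o = x
      · have key : ∀ w : I, μ' w = some o → w = j := by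
          intro w hw
          by_contra hwj
          simp only [hμ'def, if_neg hwj] at hw
          by_cases hwT : inT w
          · rw [if_pos hwT] at hw; rw [ho] at hw; exact hxfree w hwT hw
          · rw [if_neg hwT] at hw; cases hw
        rw [key u hu, key v hv]
      · have key : ∀ w : I, μ' w = some o → μ w = some o := by
          intro w hw
          by_cases hwj : w = j
          · simp only [hμ'def, if_pos hwj] at hw
            exact absurd (Option.some.inj hw).symm ho
          · simp only [hμ'def, if_neg hwj] at hw
            by_cases hwT : inT w
            · rwa [if_pos hwT] at hw
            · rw [if_neg hwT] at hw; cases hw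
        exact huniq o u v (key u hu) (key v hv)
    have hnl : ∀ i : I, ¬ Prefers (P i) (μ i) (μ' i) := by
      intro i hpref
      by_cases hij : i = j
      · have hμ'i : μ' i = some x := by simp only [hμ'def, if_pos hij]
        have hiT : inT i := by rw [hij]; exact hjT
        rw [hPg i hiT, hμ'i, prefg] at hpref
        have h1 : fgood a b c (μ i) ≤ Fintype.card O :=
          fgood_le (by rw [hij]; exact hja) (by rw [hij]; exact hjb) (by rw [hij]; exact hjc)
        omega
      · by_cases hiT : inT i
        · have hμ'i : μ' i = μ i := by simp only [hμ'def, if_neg hij, if_pos hiT]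
          rw [hPg i hiT, hμ'i, prefg] at hpref
          omega
        · have hμ'i : μ' i = none := by simp only [hμ'def, if_neg hij, if_neg hiT]
          rw [hPb i hiT, hμ'i, prefb, fbad_none] at hpref
          have := fbad_le (μ i)
          omega
    have hgain : Prefers (P j) (μ' j) (μ j) := by
      have hμ'j : μ' j = some x := by simp only [hμ'def]; simp
      rw [hPg j hjT, hμ'j, prefg]
      have h1 : fgood a b c (μ j) ≤ Fintype.card O := fgood_le hja hjb hjc
      omega
    apply hpop μ' hμ'match
    unfold MorePopular
    have hL : (Finset.univ.filter fun j' : I => Prefers (P j') (μ j') (μ' j')).card = 0 := by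
      rw [Finset.card_eq_zero, Finset.filter_eq_empty_iff]
      intro i _
      exact hnl i
    rw [hL]
    exact Finset.card_pos.mpr ⟨j, Finset.mem_filter.mpr ⟨Finset.mem_univ _, hgain⟩⟩
  -- pigeonhole: the three T agents cannot all hold objects from a 2-element set.
  have pigeon : ∀ y z : O, (∀ i, inT i → μ i = some y ∨ μ i = some z) → False := by
    intro y z hall
    have h1 := hall (eI 0) (Or.inl rfl)
    have h2 := hall (eI 1) (Or.inr (Or.inl rfl))
    have h3 := hall (eI 2) (Or.inr (Or.inr rfl))
    rcases h1 with h1 | h1 <;> rcases h2 with h2 | h2 <;> rcases h3 with h3 | h3 <;>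
      first
        | exact hi12 (huniq _ _ _ h1 h2)
        | exact hi13 (huniq _ _ _ h1 h3)
        | exact hi23 (huniq _ _ _ h2 h3)
  by_cases ha : ∃ i, inT i ∧ μ i = some a
  · by_cases hb : ∃ i, inT i ∧ μ i = some b
    · by_cases hc : ∃ i, inT i ∧ μ i = some c
      · -- Case 1: all of a, b, c are held by T-agents; rotate them.
        obtain ⟨j1, hj1T, hj1⟩ := ha
        obtain ⟨j2, hj2T, hj2⟩ := hb
        obtain ⟨j3, hj3T, hj3⟩ := hc
        have hj12 : j1 ≠ j2 := by
          intro h; rw [h] at hj1; exact hab (Option.some.inj (hj1.symm.trans hj2))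
        have hj13 : j1 ≠ j3 := by
          intro h; rw [h] at hj1; exact hac (Option.some.inj (hj1.symm.trans hj3))
        have hj23 : j2 ≠ j3 := by
          intro h; rw [h] at hj2; exact hbc (Option.some.inj (hj2.symm.trans hj3))
        set μ' : I → Option O := fun i =>
          if i = j1 then some c else if i = j2 then some a else if i = j3 then some b else none
          with hμ'def
        have hμ'match : IsMatching (fun _ => 1) μ' := by
          intro o
          rw [Finset.card_le_one]
          intro u hu v hv
          simp only [Finset.mem_filter, Finset.mem_univ, true_and] at hu hv
          have key : ∀ w : I, μ' w = some o →
              (w = j1 ∧ o = c) ∨ (w = j2 ∧ o = a) ∨ (w = j3 ∧ o = b) := by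
            intro w hw
            simp only [hμ'def] at hw
            split_ifs at hw with h1 h2 h3
            all_goals first
              | exact Or.inl ⟨h1, (Option.some.inj hw).symm⟩
              | exact Or.inr (Or.inl ⟨h2, (Option.some.inj hw).symm⟩)
              | exact Or.inr (Or.inr ⟨h3, (Option.some.inj hw).symm⟩)
              | exact Option.noConfusion hw
          rcases key u hu with ⟨hu1, hu2⟩ | ⟨hu1, hu2⟩ | ⟨hu1, hu2⟩ <;>
            rcases key v hv with ⟨hv1, hv2⟩ | ⟨hv1, hv2⟩ | ⟨hv1, hv2⟩ <;>
              first
                | exact hu1.trans hv1.symm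
                | exact absurd (hu2.symm.trans hv2) hab
                | exact absurd (hu2.symm.trans hv2) hac
                | exact absurd (hu2.symm.trans hv2) hbc
                | exact absurd (hu2.symm.trans hv2) (Ne.symm hab)
                | exact absurd (hu2.symm.trans hv2) (Ne.symm hac)
                | exact absurd (hu2.symm.trans hv2) (Ne.symm hbc)
        have hTcard : ({eI 0, eI 1, eI 2} : Finset I).card = 3 := by
          rw [Finset.card_insert_of_notMem (by simp [hi12, hi13]),
            Finset.card_insert_of_notMem (by simp [hi23]), Finset.card_singleton]
        have hJcard : ({j1, j2, j3} : Finset I).card = 3 := by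
          rw [Finset.card_insert_of_notMem (by simp [hj12, hj13]),
            Finset.card_insert_of_notMem (by simp [hj23]), Finset.card_singleton]
        have hTset : ({eI 0, eI 1, eI 2} : Finset I) = {j1, j2, j3} := by
          refine (Finset.eq_of_subset_of_card_le ?_ ?_).symm
          · intro w hw
            simp only [Finset.mem_insert, Finset.mem_singleton] at hw ⊢
            rcases hw with h | h | h
            · rw [h]; exact hj1T
            · rw [h]; exact hj2T
            · rw [h]; exact hj3T
          · rw [hTcard, hJcard]
        have hT_eq : ∀ i : I, inT i → i = j1 ∨ i = j2 ∨ i = j3 := by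
          intro i hi
          have hmem : i ∈ ({eI 0, eI 1, eI 2} : Finset I) := by
            simp only [Finset.mem_insert, Finset.mem_singleton]
            exact hi
          rw [hTset] at hmem
          simpa using hmem
        have hLsub : (Finset.univ.filter fun j' : I => Prefers (P j') (μ j') (μ' j')) ⊆
            {j1} := by
          intro i hi
          simp only [Finset.mem_filter] at hi
          obtain ⟨-, hpref⟩ := hi
          simp only [Finset.mem_singleton]
          by_contra h1
          by_cases h2 : i = j2
          · have hμ'i : μ' i = some a := by simp only [hμ'def, if_neg h1, if_pos h2]
            have hμi : μ i = some b := by rw [h2]; exact hj2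
            rw [hPg i (by rw [h2]; exact hj2T), hμ'i, hμi, prefg, fgood_a,
              fgood_b (Ne.symm hab)] at hpref
            omega
          · by_cases h3 : i = j3
            · have hμ'i : μ' i = some b := by
                simp only [hμ'def, if_neg h1, if_neg h2, if_pos h3]
              have hμi : μ i = some c := by rw [h3]; exact hj3
              rw [hPg i (by rw [h3]; exact hj3T), hμ'i, hμi, prefg,
                fgood_b (Ne.symm hab), fgood_c (Ne.symm hac) (Ne.symm hbc)] at hpref
              omega
            · have hiT : ¬ inT i := by
                intro hiT
                rcases hT_eq i hiT with h | h | h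
                · exact h1 h
                · exact h2 h
                · exact h3 h
              have hμ'i : μ' i = none := by
                simp only [hμ'def, if_neg h1, if_neg h2, if_neg h3]
              rw [hPb i hiT, hμ'i, prefb, fbad_none] at hpref
              have := fbad_le (μ i)
              omega
        have hgain2 : Prefers (P j2) (μ' j2) (μ j2) := by
          have hμ'j2 : μ' j2 = some a := by
            simp only [hμ'def, if_neg (Ne.symm hj12)]; simp
          rw [hPg j2 hj2T, hμ'j2, hj2, prefg, fgood_a, fgood_b (Ne.symm hab)]
          omega
        have hgain3 : Prefers (P j3) (μ' j3) (μ j3) := by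
          have hμ'j3 : μ' j3 = some b := by
            simp only [hμ'def, if_neg (Ne.symm hj13), if_neg (Ne.symm hj23)]; simp
          rw [hPg j3 hj3T, hμ'j3, hj3, prefg, fgood_b (Ne.symm hab),
            fgood_c (Ne.symm hac) (Ne.symm hbc)]
          omega
        apply hpop μ' hμ'match
        unfold MorePopular
        have hLle : (Finset.univ.filter fun j' : I => Prefers (P j') (μ j') (μ' j')).card ≤ 1 :=
          le_trans (Finset.card_le_card hLsub) (by simp)
        have hGge : 2 ≤ (Finset.univ.filter fun i : I => Prefers (P i) (μ' i) (μ i)).card := by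
          have hsub : ({j2, j3} : Finset I) ⊆
              Finset.univ.filter fun i : I => Prefers (P i) (μ' i) (μ i) := by
            intro w hw
            simp only [Finset.mem_insert, Finset.mem_singleton] at hw
            rcases hw with h | h
            · exact Finset.mem_filter.mpr ⟨Finset.mem_univ _, h ▸ hgain2⟩
            · exact Finset.mem_filter.mpr ⟨Finset.mem_univ _, h ▸ hgain3⟩
          calc 2 = ({j2, j3} : Finset I).card := by
                rw [Finset.card_insert_of_notMem (by simp [hj23]), Finset.card_singleton]
            _ ≤ _ := Finset.card_le_card hsub
        omega
      · -- c is not held by any T-agent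
        push_neg at hc
        by_cases hj : ∃ j, inT j ∧ μ j ≠ some a ∧ μ j ≠ some b ∧ μ j ≠ some c
        · obtain ⟨j, hjT, hja, hjb, hjc⟩ := hj
          exact case2 c (le_of_eq (fgood_c (Ne.symm hac) (Ne.symm hbc)).symm) hc j hjT hja hjb hjc
        · push_neg at hj
          refine pigeon a b fun i hi => ?_
          by_cases h1 : μ i = some a
          · exact Or.inl h1
          · by_cases h2 : μ i = some b
            · exact Or.inr h2
            · exact absurd (hj i hi h1 h2) (hc i hi)
    · -- b is not held by any T-agent
      push_neg at hb
      by_cases hj : ∃ j, inT j ∧ μ j ≠ some a ∧ μ j ≠ some b ∧ μ j ≠ some c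
      · obtain ⟨j, hjT, hja, hjb, hjc⟩ := hj
        exact case2 b (by rw [fgood_b (Ne.symm hab)]; omega) hb j hjT hja hjb hjc
      · push_neg at hj
        refine pigeon a c fun i hi => ?_
        by_cases h1 : μ i = some a
        · exact Or.inl h1
        · by_cases h2 : μ i = some b
          · exact absurd h2 (hb i hi)
          · exact Or.inr (hj i hi h1 h2)
  · -- a is not held by any T-agent
    push_neg at ha
    by_cases hj : ∃ j, inT j ∧ μ j ≠ some a ∧ μ j ≠ some b ∧ μ j ≠ some c
    · obtain ⟨j, hjT, hja, hjb, hjc⟩ := hj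
      exact case2 a (by rw [fgood_a]; omega) ha j hjT hja hjb hjc
    · push_neg at hj
      refine pigeon b c fun i hi => ?_
      by_cases h1 : μ i = some a
      · exact absurd h1 (ha i hi)
      · by_cases h2 : μ i = some b
        · exact Or.inl h2
        · exact Or.inr (hj i hi h1 h2)
end
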